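/- arXiv:2007.12889 — 4 statements merged into one kernel-verified Lean document; each statement's English description precedes it below -/
import Mathlib

section
/- If Λ : ℝ → ℝ is totally positive, not almost everywhere zero, and not of the form Λ(x) = e^{ax+b} for constants a, b ∈ ℝ, then there exists a real constant c such that the function Λ₁(x) = e^{cx} Λ(x) is a Pólya frequency function (i.e. Λ₁ is totally positive and integrable). -/
open MeasureTheory Complex

/-- A measurable function `Λ : ℝ → ℝ` is totally positive if every matrix
`(Λ (x j - y k))` built from increasing nodes has nonnegative determinant. -/
def TotallyPositive (Λ : ℝ → ℝ) : Prop :=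
  Measurable Λ ∧ ∀ (n : ℕ) (x y : Fin n → ℝ), StrictMono x → StrictMono y →
    0 ≤ (Matrix.of fun j k => Λ (x j - y k)).det

/-- A Pólya frequency function: totally positive, integrable, not a.e. zero. -/
def PolyaFrequency (Λ : ℝ → ℝ) : Prop :=
  TotallyPositive Λ ∧ Integrable Λ ∧ ¬ (∀ᵐ x : ℝ, Λ x = 0)

/-- The Laguerre–Pólya class. -/
def LaguerrePolya (Ψ : ℂ → ℂ) : Prop :=
  ∃ (C δ γ : ℝ) (m : ℕ) (d : ℕ → ℝ),
    C ≠ 0 ∧ 0 ≤ γ ∧ Summable (fun j => (d j) ^ 2) ∧ 0 < γ + ∑' j, (d j) ^ 2 ∧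
    (∀ s : ℂ, Multipliable (fun j => (1 + (d j : ℂ) * s) * Complex.exp (-(d j : ℂ) * s))) ∧
    ∀ s : ℂ, Ψ s = (C : ℂ) * s ^ m * Complex.exp (-(γ : ℂ) * s ^ 2 + (δ : ℂ) * s) *
      ∏' j, ((1 + (d j : ℂ) * s) * Complex.exp (-(d j : ℂ) * s))

open Set Filter Topology
open scoped ENNReal

namespace PFAux

lemma strictMono2 {a b : ℝ} (h : a < b) : StrictMono ![a, b] := by
  intro i j hij
  fin_cases i <;> fin_cases j <;> simp_all

lemma nonneg {Λ : ℝ → ℝ} (hTP : TotallyPositive Λ) (t : ℝ) : 0 ≤ Λ t := by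
  have := hTP.2 1 ![t] ![0] (Subsingleton.strictMono _) (Subsingleton.strictMono _)
  simpa [Matrix.det_fin_one] using this

lemma keyIneq {Λ : ℝ → ℝ} (hTP : TotallyPositive Λ) {x p q y : ℝ}
    (h1 : x < p) (h2 : p ≤ q) (h3 : q < y) (hsum : p + q = x + y) :
    Λ x * Λ y ≤ Λ p * Λ q := by
  have hxy : p < y := lt_of_le_of_lt h2 h3
  have h0 : (0:ℝ) < p - x := by linarith
  have := hTP.2 2 ![p, y] ![0, p - x] (strictMono2 hxy) (strictMono2 h0)
  rw [Matrix.det_fin_two] at this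
  simp only [Matrix.of_apply, Matrix.cons_val', Matrix.cons_val_zero, Matrix.cons_val_one,
    Matrix.head_cons, Matrix.empty_val', Matrix.cons_val_fin_one, Matrix.head_fin_const] at this
  have e1 : p - (p - x) = x := by ring
  have e2 : y - (p - x) = q := by linarith
  rw [sub_zero, sub_zero, e1, e2] at this
  linarith


lemma overlap {A B Q : Set ℝ} (hB : MeasurableSet B)
    (hAQ : A ⊆ Q) (hBQ : B ⊆ Q) (h : volume Q < volume A + volume B) :
    (A ∩ B).Nonempty := by
  rw [nonempty_iff_ne_empty]
  intro hE
  have hd : Disjoint A B := disjoint_iff_inter_eq_empty.2 hE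
  have hu := measure_union (μ := volume) hd hB
  have hle : volume (A ∪ B) ≤ volume Q := measure_mono (union_subset hAQ hBQ)
  rw [hu] at hle
  exact absurd h (not_lt.2 hle)

lemma volume_reflect (c : ℝ) {A : Set ℝ} (hA : MeasurableSet A) :
    volume {x : ℝ | c - x ∈ A} = volume A :=
  (Measure.measurePreserving_sub_left (volume : Measure ℝ) c).measure_preimage
    hA.nullMeasurableSet

variable {Λ : ℝ → ℝ}

lemma lower_window (hmeas : Measurable Λ) (hnn : ∀ t, 0 ≤ Λ t)
    (hK : ∀ {x p q y : ℝ}, x < p → p ≤ q → q < y → p + q = x + y → Λ x * Λ y ≤ Λ p * Λ q)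
    (hne : ¬ ∀ᵐ x : ℝ, Λ x = 0) :
    ∃ ε : ℝ, 0 < ε ∧ ∃ a b : ℝ, a < b ∧ ∀ t ∈ Ioo a b, ε ≤ Λ t := by
  rw [ae_iff] at hne
  -- find a positive measure piece
  set An : ℕ → Set ℝ := fun n =>
    {x | 1/((n:ℝ)+1) ≤ Λ x} ∩ Ioo (-(n:ℝ)-1) ((n:ℝ)+1) with hAn
  have hcover : {x | ¬ Λ x = 0} ⊆ ⋃ n, An n := by
    intro x hx
    have hpos : 0 < Λ x := lt_of_le_of_ne (hnn x) (Ne.symm hx)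
    obtain ⟨n, hn⟩ := exists_nat_gt (max (1/Λ x) |x|)
    refine mem_iUnion.2 ⟨n, ⟨?_, ?_⟩⟩
    · have h1 : 1/Λ x < (n:ℝ)+1 := lt_of_le_of_lt (le_max_left _ _) (by linarith)
      have : 1/((n:ℝ)+1) < Λ x := by
        rw [div_lt_iff₀ (by positivity)]
        rw [div_lt_iff₀ hpos] at h1
        nlinarith
      exact this.le
    · have h2 : |x| < (n:ℝ)+1 := lt_of_le_of_lt (le_max_right _ _) (by linarith)
      rw [abs_lt] at h2
      exact ⟨by linarith [h2.1], h2.2⟩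
  have hex : ∃ n, volume (An n) ≠ 0 := by
    by_contra hall
    push_neg at hall
    have : volume (⋃ n, An n) = 0 := measure_iUnion_null hall
    exact hne (measure_mono_null hcover this)
  obtain ⟨n, hApos⟩ := hex
  set A := An n with hA
  have hAmeas : MeasurableSet A :=
    (measurableSet_le measurable_const hmeas).inter measurableSet_Ioo
  set ε : ℝ := 1/((n:ℝ)+1) with hεdef
  have hε : 0 < ε := by positivity
  have hεA : ∀ x ∈ A, ε ≤ Λ x := fun x hx => hx.1
  clear hεdef
  clear_value ε
  -- density point
  have hd := Besicovitch.ae_tendsto_measure_inter_div_of_measurableSet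
    (volume : Measure ℝ) hAmeas
  rw [ae_iff] at hd
  have hexd : (A ∩ {x | Tendsto (fun r => volume (A ∩ Metric.closedBall x r) /
      volume (Metric.closedBall x r)) (𝓝[>] 0) (𝓝 (A.indicator 1 x))}).Nonempty := by
    rw [nonempty_iff_ne_empty]
    intro hcontra
    apply hApos
    refine measure_mono_null (fun x hx => ?_) hd
    simp only [mem_setOf_eq]
    intro hPx
    exact eq_empty_iff_forall_notMem.1 hcontra x ⟨hx, hPx⟩
  obtain ⟨x₀, hx₀A, hx₀P⟩ := hexd
  have hind : A.indicator (1 : ℝ → ℝ≥0∞) x₀ = 1 := by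
    simp [indicator_of_mem hx₀A]
  have htend : Tendsto (fun r => volume (A ∩ Metric.closedBall x₀ r) /
      volume (Metric.closedBall x₀ r)) (𝓝[>] 0) (𝓝 1) := by
    rw [← hind]; exact hx₀P
  have hlt1 : ENNReal.ofReal (7/8) < 1 := by
    rw [show (1:ℝ≥0∞) = ENNReal.ofReal 1 from ENNReal.ofReal_one.symm]
    exact (ENNReal.ofReal_lt_ofReal_iff (by norm_num)).2 (by norm_num)
  have hev : ∀ᶠ r in 𝓝[>] (0:ℝ), ENNReal.ofReal (7/8) < volume (A ∩ Metric.closedBall x₀ r) /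
      volume (Metric.closedBall x₀ r) := htend.eventually (lt_mem_nhds hlt1)
  obtain ⟨r, hratio, hr0⟩ := (hev.and self_mem_nhdsWithin).exists
  have hcb : volume (Metric.closedBall x₀ r) = ENNReal.ofReal (2*r) := by
    rw [Real.volume_closedBall]
  have hb0 : volume (Metric.closedBall x₀ r) ≠ 0 := by
    rw [hcb]; simp [ENNReal.ofReal_eq_zero]; linarith
  have hbt : volume (Metric.closedBall x₀ r) ≠ ⊤ := by rw [hcb]; exact ENNReal.ofReal_ne_top
  have hA₁ : ENNReal.ofReal (7/4*r) < volume (A ∩ Metric.closedBall x₀ r) := by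
    have h2 := (ENNReal.lt_div_iff_mul_lt (Or.inl hb0) (Or.inl hbt)).1 hratio
    calc ENNReal.ofReal (7/4*r) = ENNReal.ofReal (7/8) * ENNReal.ofReal (2*r) := by
          rw [← ENNReal.ofReal_mul (by norm_num)]
          congr 1
          ring
      _ = ENNReal.ofReal (7/8) * volume (Metric.closedBall x₀ r) := by rw [hcb]
      _ < _ := h2
  -- conclusion
  refine ⟨ε, hε, x₀ - r/4, x₀ + r/4, by linarith, ?_⟩
  intro t ht
  set A₁ := A ∩ Metric.closedBall x₀ r with hA₁def
  have hA₁meas : MeasurableSet A₁ := hAmeas.inter measurableSet_closedBall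
  set A₂ := {x : ℝ | 2*t - x ∈ A₁} with hA₂def
  have hA₂vol : volume A₂ = volume A₁ := volume_reflect (2*t) hA₁meas
  have hA₂meas : MeasurableSet A₂ := hA₁meas.preimage (measurable_const.sub measurable_id)
  have hQ : volume (Metric.closedBall x₀ (3/2*r)) = ENNReal.ofReal (3*r) := by
    rw [Real.volume_closedBall]; congr 1; ring
  have hsub1 : A₁ ⊆ Metric.closedBall x₀ (3/2*r) := fun x hx =>
    Metric.closedBall_subset_closedBall (by linarith) hx.2
  have hsub2 : A₂ ⊆ Metric.closedBall x₀ (3/2*r) := by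
    intro x hx
    have h1 : 2*t - x ∈ Metric.closedBall x₀ r := hx.2
    rw [Metric.mem_closedBall, Real.dist_eq] at h1 ⊢
    rw [abs_le] at h1 ⊢
    obtain ⟨ht1, ht2⟩ := ht
    constructor <;> cases' h1 with h1a h1b <;> linarith
  have hover : (A₁ ∩ A₂).Nonempty := by
    refine overlap hA₂meas hsub1 hsub2 ?_
    rw [hQ, hA₂vol]
    calc ENNReal.ofReal (3*r)
        < ENNReal.ofReal (7/4*r) + ENNReal.ofReal (7/4*r) := by
          rw [← ENNReal.ofReal_add (by linarith) (by linarith)]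
          exact ENNReal.ofReal_lt_ofReal_iff_of_nonneg (by linarith) |>.2 (by linarith)
      _ ≤ volume A₁ + volume A₁ := add_le_add hA₁.le hA₁.le
  obtain ⟨p, hp1, hp2⟩ := hover
  have hpA : p ∈ A := hp1.1
  have hqA : 2*t - p ∈ A := hp2.1
  set q := 2*t - p with hq
  have hΛp : ε ≤ Λ p := hεA p hpA
  have hΛq : ε ≤ Λ q := hεA q hqA
  rcases lt_trichotomy p q with hlt | heq | hgt
  · have h1 : p < t := by simp only [hq] at hlt; linarith
    have h3 : t < q := by simp only [hq]; linarith
    have := hK h1 le_rfl h3 (by simp only [hq]; ring)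
    nlinarith [hnn t]
  · have : t = p := by simp only [hq] at heq; linarith
    rw [this]; exact hΛp
  · have h1 : q < t := by simp only [hq] at hgt ⊢; linarith
    have h3 : t < p := by simp only [hq] at hgt; linarith
    have := hK h1 le_rfl h3 (by simp only [hq]; ring)
    nlinarith [hnn t]


lemma exists_reflected_pair (hmeas : Measurable Λ) (c₀ : ℝ) {l : ℝ} (hl : 0 < l) :
    ∃ n : ℕ, ∀ c : ℝ, |c - c₀| ≤ l →
      ∃ p q : ℝ, p + q = c ∧ Λ p ≤ n ∧ Λ q ≤ n ∧ |p - c/2| < l ∧ |q - c/2| < l := by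
  set Q : Set ℝ := Ioo (c₀/2 - 2*l) (c₀/2 + 2*l) with hQdef
  set B : ℕ → Set ℝ := fun n => {s | Λ s ≤ (n:ℝ)} with hBdef
  have hBmeas : ∀ n, MeasurableSet (B n) := fun n => measurableSet_le hmeas measurable_const
  have hQBmeas : ∀ n : ℕ, NullMeasurableSet (Q \ B n) volume := fun n =>
    (measurableSet_Ioo.diff (hBmeas n)).nullMeasurableSet
  have hanti : Antitone fun n => Q \ B n := by
    intro a b hab
    apply diff_subset_diff_right
    intro x hx
    exact le_trans (α := ℝ) hx (Nat.cast_le.2 hab)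
  have hempty : ⋂ n, (Q \ B n) = ∅ := by
    ext x
    simp only [mem_iInter, mem_diff, mem_empty_iff_false, iff_false, not_forall]
    obtain ⟨n, hn⟩ := exists_nat_ge (Λ x)
    exact ⟨n, fun h => h.2 hn⟩
  have hfin : ∃ n : ℕ, volume (Q \ B n) ≠ ∞ :=
    ⟨0, ne_top_of_le_ne_top (by rw [hQdef]; exact measure_Ioo_lt_top.ne)
      (measure_mono diff_subset)⟩
  have htend : Tendsto (fun n => volume (Q \ B n)) atTop (𝓝 0) := by
    have := tendsto_measure_iInter_atTop hQBmeas hanti hfin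
    rwa [hempty, measure_empty] at this
  have hev : ∀ᶠ n in atTop, volume (Q \ B n) < ENNReal.ofReal (l/2) :=
    htend.eventually (Iio_mem_nhds (by simp [ENNReal.ofReal_pos]; linarith))
  obtain ⟨n, hn⟩ := hev.exists
  refine ⟨n, fun c hc => ?_⟩
  rw [abs_le] at hc
  set m := c/2 with hm
  set Qt : Set ℝ := Ioo (m - l) (m + l) with hQt
  have hQtQ : Qt ⊆ Q := by
    intro x hx
    obtain ⟨h1, h2⟩ := hx
    constructor <;> simp only [hm] at h1 h2 <;> [linarith; linarith]
  set A₁ : Set ℝ := B n ∩ Qt with hA₁def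
  have hA₁meas : MeasurableSet A₁ := (hBmeas n).inter measurableSet_Ioo
  have hvolA₁ : ENNReal.ofReal l < volume A₁ := by
    by_contra hcon
    push_neg at hcon
    have hsub : Qt ⊆ A₁ ∪ (Q \ B n) := by
      intro x hx
      by_cases hxB : x ∈ B n
      · exact Or.inl ⟨hxB, hx⟩
      · exact Or.inr ⟨hQtQ hx, hxB⟩
    have h1 : volume Qt ≤ volume A₁ + volume (Q \ B n) :=
      le_trans (measure_mono hsub) (measure_union_le _ _)
    have h2 : volume Qt = ENNReal.ofReal (2*l) := by
      rw [hQt, Real.volume_Ioo]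
      congr 1
      ring
    rw [h2] at h1
    have h3 : volume A₁ + volume (Q \ B n) < ENNReal.ofReal l + ENNReal.ofReal (l/2) :=
      ENNReal.add_lt_add_of_le_of_lt (lt_of_le_of_lt hcon ENNReal.ofReal_lt_top).ne hcon hn
    rw [← ENNReal.ofReal_add (by linarith) (by linarith)] at h3
    have h4 : ENNReal.ofReal (2*l) < ENNReal.ofReal (l + l/2) := lt_of_le_of_lt h1 h3
    rw [ENNReal.ofReal_lt_ofReal_iff (by linarith)] at h4
    linarith
  set A₂ : Set ℝ := {x : ℝ | c - x ∈ A₁} with hA₂def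
  have hA₂vol : volume A₂ = volume A₁ := volume_reflect c hA₁meas
  have hA₂meas : MeasurableSet A₂ := hA₁meas.preimage (measurable_const.sub measurable_id)
  have hA₂Qt : A₂ ⊆ Qt := by
    intro x hx
    have h1 : c - x ∈ Qt := hx.2
    obtain ⟨ha, hb⟩ := h1
    constructor <;> simp only [hm] at ha hb ⊢ <;> [linarith; linarith]
  have hover : (A₁ ∩ A₂).Nonempty := by
    refine overlap hA₂meas (inter_subset_right) hA₂Qt ?_
    have h2 : volume Qt = ENNReal.ofReal (2*l) := by
      rw [hQt, Real.volume_Ioo]; congr 1; ring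
    rw [h2, hA₂vol]
    calc ENNReal.ofReal (2*l) = ENNReal.ofReal l + ENNReal.ofReal l := by
          rw [← ENNReal.ofReal_add (by linarith) (by linarith)]; congr 1; ring
      _ < volume A₁ + volume A₁ := ENNReal.add_lt_add hvolA₁ hvolA₁
  obtain ⟨p, hp1, hp2⟩ := hover
  refine ⟨p, c - p, by ring, hp1.1, hp2.1, ?_, ?_⟩
  · obtain ⟨ha, hb⟩ := hp1.2
    rw [abs_lt]; constructor <;> linarith
  · obtain ⟨ha, hb⟩ := hp2.2
    rw [abs_lt]; constructor <;> linarith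

end PFAux

namespace PFAux2
open PFAux
variable {Λ : ℝ → ℝ}

lemma locally_bdd (hmeas : Measurable Λ) (hnn : ∀ t, 0 ≤ Λ t)
    (hK : ∀ {x p q y : ℝ}, x < p → p ≤ q → q < y → p + q = x + y → Λ x * Λ y ≤ Λ p * Λ q)
    {j t₀ : ℝ} (hj : 0 < Λ j) (hne : t₀ ≠ j) :
    ∃ δ M : ℝ, 0 < δ ∧ ∀ t : ℝ, |t - t₀| ≤ δ → Λ t ≤ M := by
  set l : ℝ := |t₀ - j|/8 with hldef
  have hl : 0 < l := by
    have : 0 < |t₀ - j| := abs_pos.2 (sub_ne_zero.2 hne)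
    positivity
  obtain ⟨n, hn⟩ := exists_reflected_pair hmeas (j + t₀) hl
  refine ⟨l, ((n:ℝ)*n)/Λ j, hl, fun t ht => ?_⟩
  have hc : |(j + t) - (j + t₀)| ≤ l := by
    rw [show (j+t)-(j+t₀) = t - t₀ by ring]; exact ht
  obtain ⟨p, q, hpq, hΛp, hΛq, hpm, hqm⟩ := hn (j + t) hc
  have h8 : |t₀ - j| = 8*l := by rw [hldef]; ring
  have h7 : 7*l ≤ |t - j| := by
    have htri : |t₀ - j| - |t - j| ≤ |(t₀ - j) - (t - j)| := abs_sub_abs_le_abs_sub _ _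
    have : |(t₀ - j) - (t - j)| = |t - t₀| := by rw [show (t₀-j)-(t-j) = -(t-t₀) by ring, abs_neg]
    rw [this] at htri
    linarith [h8 ▸ htri, ht]
  have hpm' := abs_lt.1 hpm
  have hqm' := abs_lt.1 hqm
  have hmul : Λ j * Λ t ≤ (n:ℝ) * n := by
    have hn0 : (0:ℝ) ≤ n := Nat.cast_nonneg n
    rcases le_or_gt j t with hjt | hjt
    · have hjt' : j + 7*l ≤ t := by rw [_root_.abs_of_nonneg (by linarith)] at h7; linarith
      have hpj : j < p := by linarith [hpm'.1]
      have hpt : p < t := by linarith [hpm'.2]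
      have hqj : j < q := by linarith [hqm'.1]
      have hqt : q < t := by linarith [hqm'.2]
      rcases le_total p q with hle | hle
      · exact le_trans (hK hpj hle hqt (by linarith))
          (mul_le_mul hΛp hΛq (hnn q) (le_trans (hnn p) hΛp))
      · exact le_trans (hK hqj hle hpt (by linarith))
          (mul_le_mul hΛq hΛp (hnn p) (le_trans (hnn q) hΛq))
    · have hjt' : t + 7*l ≤ j := by rw [_root_.abs_of_nonpos (by linarith)] at h7; linarith
      have hpj : p < j := by linarith [hpm'.2]
      have hpt : t < p := by linarith [hpm'.1]
      have hqj : q < j := by linarith [hqm'.2]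
      have hqt : t < q := by linarith [hqm'.1]
      rw [mul_comm]
      rcases le_total p q with hle | hle
      · exact le_trans (hK hpt hle hqj (by linarith))
          (mul_le_mul hΛp hΛq (hnn q) (le_trans (hnn p) hΛp))
      · exact le_trans (hK hqt hle hpj (by linarith))
          (mul_le_mul hΛq hΛp (hnn p) (le_trans (hnn q) hΛq))
  rw [le_div_iff₀ hj]
  nlinarith [hmul]

end PFAux2

namespace PFAux3
open PFAux PFAux2
variable {Λ : ℝ → ℝ}

lemma bdd_on_Icc (hmeas : Measurable Λ) (hnn : ∀ t, 0 ≤ Λ t)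
    (hK : ∀ {x p q y : ℝ}, x < p → p ≤ q → q < y → p + q = x + y → Λ x * Λ y ≤ Λ p * Λ q)
    {u v : ℝ} (hu : 0 < Λ u) (hv : 0 < Λ v) (huv : u ≠ v) (a b : ℝ) :
    ∃ M : ℝ, ∀ t ∈ Icc a b, Λ t ≤ M := by
  have hloc : ∀ t₀ : ℝ, ∃ δ M : ℝ, 0 < δ ∧ ∀ t, |t - t₀| ≤ δ → Λ t ≤ M := by
    intro t₀
    rcases ne_or_eq t₀ u with h | h
    · exact locally_bdd hmeas hnn hK hu h
    · refine locally_bdd hmeas hnn hK hv ?_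
      rw [h]; exact huv
  choose δ M hδ hM using hloc
  have hcov : Icc a b ⊆ ⋃ t₀ : ℝ, Ioo (t₀ - δ t₀) (t₀ + δ t₀) := fun x _ =>
    mem_iUnion.2 ⟨x, by constructor <;> linarith [hδ x]⟩
  obtain ⟨F, hF⟩ := isCompact_Icc.elim_finite_subcover _ (fun _ => isOpen_Ioo) hcov
  by_cases hab : a ≤ b
  · have ha : a ∈ Icc a b := ⟨le_refl _, hab⟩
    obtain ⟨i, hiF, _⟩ := mem_iUnion₂.1 (hF ha)
    have hFne : F.Nonempty := ⟨i, hiF⟩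
    refine ⟨F.sup' hFne M, fun t htI => ?_⟩
    obtain ⟨i', hi'F, hi'⟩ := mem_iUnion₂.1 (hF htI)
    obtain ⟨h1, h2⟩ := hi'
    have hle : Λ t ≤ M i' := hM i' t (by rw [abs_le]; constructor <;> linarith)
    exact le_trans hle (Finset.le_sup' M hi'F)
  · exact ⟨0, fun t htI => absurd (le_trans htI.1 htI.2) hab⟩

end PFAux3

namespace PFAux4
open PFAux
variable {Λ : ℝ → ℝ}

lemma tailR (hnn : ∀ t, 0 ≤ Λ t)
    (hK : ∀ {x p q y : ℝ}, x < p → p ≤ q → q < y → p + q = x + y → Λ x * Λ y ≤ Λ p * Λ q)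
    {u v M : ℝ} (hu : 0 < Λ u) (hv : 0 < Λ v) (huv : u < v)
    (hM : ∀ t ∈ Icc v (v + (v-u)), Λ t ≤ M) :
    ∀ t, v ≤ t → Λ t ≤ (M * Real.exp (|Real.log (Λ v / Λ u) / (v-u)| * (v-u))) *
      Real.exp ((Real.log (Λ v / Λ u) / (v-u)) * (t - v)) := by
  have hh : 0 < v - u := by linarith
  set h : ℝ := v - u with hhdef
  set κ : ℝ := Real.log (Λ v / Λ u) / h with hκdef
  set R : ℝ := Λ v / Λ u with hRdef
  have hR : 0 < R := div_pos hv hu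
  have hM0 : 0 ≤ M := le_trans (hnn v) (hM v ⟨le_refl _, by linarith⟩)
  have hRexp : R = Real.exp (κ * h) := by
    rw [hκdef, div_mul_cancel₀ _ hh.ne']
    exact (Real.exp_log hR).symm
  have step : ∀ y, v ≤ y → Λ (y + h) ≤ R * Λ y := by
    intro y hy
    have hkey := hK (x := u) (p := v) (q := y) (y := y + h) huv hy (by linarith) (by ring)
    rw [hRdef, div_mul_eq_mul_div, le_div_iff₀ hu]
    nlinarith
  have iter : ∀ nn : ℕ, ∀ y, v ≤ y → Λ (y + nn*h) ≤ R^nn * Λ y := by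
    intro nn
    induction nn with
    | zero => intro y _; simp
    | succ k ih =>
      intro y hy
      have hk0 : (0:ℝ) ≤ (k:ℝ) := Nat.cast_nonneg k
      have e : y + ((k:ℕ)+1 : ℕ)*h = (y + k*h) + h := by push_cast; ring
      rw [e]
      calc Λ ((y + k*h) + h) ≤ R * Λ (y + k*h) := step _ (by nlinarith)
        _ ≤ R * (R^k * Λ y) := mul_le_mul_of_nonneg_left (ih y hy) hR.le
        _ = R^(k+1) * Λ y := by ring
  intro t htv
  set s : ℝ := t - v with hsdef
  have hs0 : 0 ≤ s := by simp [hsdef]; linarith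
  set nn : ℕ := ⌊s/h⌋₊ with hnn
  have h1 : (nn:ℝ)*h ≤ s := by
    rw [← le_div_iff₀ hh]
    exact Nat.floor_le (by positivity)
  have h2 : s < ((nn:ℝ)+1)*h := by
    rw [← div_lt_iff₀ hh]
    exact_mod_cast Nat.lt_floor_add_one (s/h)
  set y : ℝ := t - nn*h with hydef
  have hyv : v ≤ y := by simp only [hydef]; linarith
  have hyh : y ≤ v + h := by simp only [hydef]; nlinarith
  have hty : t = y + nn*h := by simp only [hydef]; ring
  have hb1 : Λ t ≤ R^nn * M := by
    rw [hty]
    exact le_trans (iter nn y hyv)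
      (mul_le_mul_of_nonneg_left (hM y ⟨hyv, hyh⟩) (pow_nonneg hR.le nn))
  have hb2 : R^nn ≤ Real.exp (|κ| * h) * Real.exp (κ*s) := by
    rw [hRexp, ← Real.exp_nat_mul, ← Real.exp_add]
    apply Real.exp_le_exp.2
    rcases le_or_gt 0 κ with hκ0 | hκ0
    · have : (nn:ℝ)*(κ*h) ≤ κ*s := by nlinarith
      have habs : |κ| = κ := _root_.abs_of_nonneg hκ0
      nlinarith [Real.exp_pos κ, habs, mul_nonneg (abs_nonneg κ) hh.le]
    · have habs : |κ| = -κ := _root_.abs_of_neg hκ0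
      nlinarith
  calc Λ t ≤ R^nn * M := hb1
    _ ≤ (Real.exp (|κ| * h) * Real.exp (κ*s)) * M := mul_le_mul_of_nonneg_right hb2 hM0
    _ = (M * Real.exp (|κ| * h)) * Real.exp (κ*(t-v)) := by rw [← hsdef]; ring

lemma tailL (hnn : ∀ t, 0 ≤ Λ t)
    (hK : ∀ {x p q y : ℝ}, x < p → p ≤ q → q < y → p + q = x + y → Λ x * Λ y ≤ Λ p * Λ q)
    {u v M : ℝ} (hu : 0 < Λ u) (hv : 0 < Λ v) (huv : u < v)
    (hM : ∀ t ∈ Icc (u - (v-u)) u, Λ t ≤ M) :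
    ∀ t, t ≤ u → Λ t ≤ (M * Real.exp (|Real.log (Λ v / Λ u) / (v-u)| * (v-u))) *
      Real.exp ((Real.log (Λ v / Λ u) / (v-u)) * (t - u)) := by
  have hh : 0 < v - u := by linarith
  set h : ℝ := v - u with hhdef
  set κ : ℝ := Real.log (Λ v / Λ u) / h with hκdef
  set R : ℝ := Λ v / Λ u with hRdef
  have hR : 0 < R := div_pos hv hu
  have hM0 : 0 ≤ M := le_trans (hnn u) (hM u ⟨by linarith, le_refl _⟩)
  have hRexp : R = Real.exp (κ * h) := by
    rw [hκdef, div_mul_cancel₀ _ hh.ne']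
    exact (Real.exp_log hR).symm
  have step : ∀ y, y ≤ u → Λ (y - h) ≤ R⁻¹ * Λ y := by
    intro y hy
    have hkey := hK (x := y - h) (p := y) (q := u) (y := v) (by linarith) hy huv (by ring)
    rw [hRdef, inv_div, div_mul_eq_mul_div, le_div_iff₀ hv]
    nlinarith
  have iter : ∀ nn : ℕ, ∀ y, y ≤ u → Λ (y - nn*h) ≤ (R⁻¹)^nn * Λ y := by
    intro nn
    induction nn with
    | zero => intro y _; simp
    | succ k ih =>
      intro y hy
      have hk0 : (0:ℝ) ≤ (k:ℝ) := Nat.cast_nonneg k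
      have e : y - ((k:ℕ)+1 : ℕ)*h = (y - k*h) - h := by push_cast; ring
      rw [e]
      calc Λ ((y - k*h) - h) ≤ R⁻¹ * Λ (y - k*h) := step _ (by nlinarith)
        _ ≤ R⁻¹ * ((R⁻¹)^k * Λ y) := mul_le_mul_of_nonneg_left (ih y hy) (inv_nonneg.2 hR.le)
        _ = (R⁻¹)^(k+1) * Λ y := by ring
  intro t htu
  set s : ℝ := u - t with hsdef
  have hs0 : 0 ≤ s := by simp [hsdef]; linarith
  set nn : ℕ := ⌊s/h⌋₊ with hnn
  have h1 : (nn:ℝ)*h ≤ s := by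
    rw [← le_div_iff₀ hh]
    exact Nat.floor_le (by positivity)
  have h2 : s < ((nn:ℝ)+1)*h := by
    rw [← div_lt_iff₀ hh]
    exact_mod_cast Nat.lt_floor_add_one (s/h)
  set y : ℝ := t + nn*h with hydef
  have hyu : y ≤ u := by simp only [hydef]; linarith
  have hyh : u - h ≤ y := by simp only [hydef]; nlinarith
  have hty : t = y - nn*h := by simp only [hydef]; ring
  have hb1 : Λ t ≤ (R⁻¹)^nn * M := by
    rw [hty]
    exact le_trans (iter nn y hyu)
      (mul_le_mul_of_nonneg_left (hM y ⟨hyh, hyu⟩) (pow_nonneg (inv_nonneg.2 hR.le) nn))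
  have hb2 : (R⁻¹)^nn ≤ Real.exp (|κ| * h) * Real.exp (κ*(-s)) := by
    have hRinv : R⁻¹ = Real.exp (-(κ*h)) := by rw [hRexp, Real.exp_neg]
    rw [hRinv, ← Real.exp_nat_mul, ← Real.exp_add]
    apply Real.exp_le_exp.2
    rcases le_or_gt 0 κ with hκ0 | hκ0
    · have habs : |κ| = κ := _root_.abs_of_nonneg hκ0
      nlinarith
    · have habs : |κ| = -κ := _root_.abs_of_neg hκ0
      nlinarith
  calc Λ t ≤ (R⁻¹)^nn * M := hb1
    _ ≤ (Real.exp (|κ| * h) * Real.exp (κ*(-s))) * M := mul_le_mul_of_nonneg_right hb2 hM0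
    _ = (M * Real.exp (|κ| * h)) * Real.exp (κ*(t-u)) := by
        rw [show κ*(-s) = κ*(t-u) by rw [hsdef]; ring]
        ring

end PFAux4

namespace PFAux5
open PFAux
variable {Λ : ℝ → ℝ}

lemma integrableOn_exp_Iic {d : ℝ} (hd : 0 < d) (A : ℝ) :
    IntegrableOn (fun t => Real.exp (d * t)) (Iic A) := by
  have h1 : IntegrableOn (fun x => Real.exp (-d * x)) (Ioi (-A)) :=
    exp_neg_integrableOn_Ioi (-A) hd
  have h2 := (MeasurePreserving.integrableOn_comp_preimage
    (Measure.measurePreserving_neg (volume : Measure ℝ))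
    (Homeomorph.neg ℝ).measurableEmbedding).2 h1
  have h3 : (fun x : ℝ => Real.exp (-d * (-x))) = fun x => Real.exp (d * x) := by
    funext x; congr 1; ring
  have h4 : (Neg.neg : ℝ → ℝ) ⁻¹' (Ioi (-A)) = Iio A := by
    ext x; simp [neg_lt]
  rw [show ((fun x : ℝ => Real.exp (-d * x)) ∘ (Neg.neg : ℝ → ℝ))
      = fun x : ℝ => Real.exp (-d * (-x)) from rfl, h3, h4] at h2
  exact h2.congr_set_ae Iio_ae_eq_Iic.symm

lemma integrable_piecewise (hmeas : Measurable Λ) (hnn : ∀ t, 0 ≤ Λ t)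
    {A B c C₁ C₂ M κ₁ κ₂ : ℝ} (hAB : A ≤ B) (hc1 : 0 < c + κ₁) (hc2 : c + κ₂ < 0)
    (h1 : ∀ t, t ≤ A → Λ t ≤ C₁ * Real.exp (κ₁ * (t - A)))
    (h2 : ∀ t ∈ Icc A B, Λ t ≤ M)
    (h3 : ∀ t, B ≤ t → Λ t ≤ C₂ * Real.exp (κ₂ * (t - B))) :
    Integrable (fun t => Real.exp (c * t) * Λ t) := by
  set f : ℝ → ℝ := fun t => Real.exp (c * t) * Λ t with hfdef
  have hfmeas : Measurable f := (Real.measurable_exp.comp (measurable_id.const_mul c)).mul hmeas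
  have hfnn : ∀ t, 0 ≤ f t := fun t => mul_nonneg (Real.exp_pos _).le (hnn t)
  have hnorm : ∀ t, ‖f t‖ = f t := fun t => Real.norm_of_nonneg (hfnn t)
  have hM0 : 0 ≤ M := le_trans (hnn A) (h2 A ⟨le_refl _, hAB⟩)
  have key : ∀ t, Real.exp (c*t) * (Real.exp (κ₁*(t-A))) =
      Real.exp (-(κ₁*A)) * Real.exp ((c+κ₁)*t) := by
    intro t
    rw [← Real.exp_add, ← Real.exp_add]
    congr 1; ring
  have key2 : ∀ t, Real.exp (c*t) * (Real.exp (κ₂*(t-B))) =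
      Real.exp (-(κ₂*B)) * Real.exp ((c+κ₂)*t) := by
    intro t
    rw [← Real.exp_add, ← Real.exp_add]
    congr 1; ring
  have hIic : IntegrableOn f (Iic A) := by
    have hg : IntegrableOn (fun t => (C₁ * Real.exp (-(κ₁*A))) * Real.exp ((c+κ₁)*t)) (Iic A) :=
      (integrableOn_exp_Iic hc1 A).const_mul _
    refine Integrable.mono' hg (hfmeas.aestronglyMeasurable.restrict) ?_
    rw [ae_restrict_iff' measurableSet_Iic]
    refine ae_of_all _ fun t ht => ?_
    rw [hnorm t]
    calc f t ≤ Real.exp (c*t) * (C₁ * Real.exp (κ₁*(t-A))) :=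
          mul_le_mul_of_nonneg_left (h1 t ht) (Real.exp_pos _).le
      _ = (C₁ * Real.exp (-(κ₁*A))) * Real.exp ((c+κ₁)*t) := by
          rw [show Real.exp (c*t) * (C₁ * Real.exp (κ₁*(t-A)))
              = C₁ * (Real.exp (c*t) * Real.exp (κ₁*(t-A))) from by ring, key t]
          ring
  have hIoc : IntegrableOn f (Ioc A B) := by
    have hg : IntegrableOn (fun _ : ℝ => Real.exp (|c| * (|A| + |B|)) * M) (Ioc A B) :=
      integrableOn_const measure_Ioc_lt_top.ne
    refine Integrable.mono' hg (hfmeas.aestronglyMeasurable.restrict) ?_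
    rw [ae_restrict_iff' measurableSet_Ioc]
    refine ae_of_all _ fun t ht => ?_
    rw [hnorm t]
    have hct : c*t ≤ |c| * (|A| + |B|) := by
      have h5 : |c*t| ≤ |c| * (|A| + |B|) := by
        rw [abs_mul]
        apply mul_le_mul_of_nonneg_left _ (abs_nonneg c)
        rw [abs_le]
        constructor <;> [linarith [neg_abs_le A, ht.1.le, abs_nonneg B];
          linarith [le_abs_self B, ht.2, abs_nonneg A]]
      linarith [le_abs_self (c*t)]
    calc f t ≤ Real.exp (c*t) * M :=
          mul_le_mul_of_nonneg_left (h2 t ⟨ht.1.le, ht.2⟩) (Real.exp_pos _).le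
      _ ≤ Real.exp (|c| * (|A| + |B|)) * M :=
          mul_le_mul_of_nonneg_right (Real.exp_le_exp.2 hct) hM0
  have hIoi : IntegrableOn f (Ioi B) := by
    have hexp : IntegrableOn (fun t => Real.exp ((c+κ₂)*t)) (Ioi B) := by
      have := exp_neg_integrableOn_Ioi B (show 0 < -(c+κ₂) by linarith)
      refine this.congr_fun (fun t _ => ?_) measurableSet_Ioi
      congr 1; ring
    have hg : IntegrableOn (fun t => (C₂ * Real.exp (-(κ₂*B))) * Real.exp ((c+κ₂)*t)) (Ioi B) :=
      hexp.const_mul _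
    refine Integrable.mono' hg (hfmeas.aestronglyMeasurable.restrict) ?_
    rw [ae_restrict_iff' measurableSet_Ioi]
    refine ae_of_all _ fun t ht => ?_
    rw [hnorm t]
    calc f t ≤ Real.exp (c*t) * (C₂ * Real.exp (κ₂*(t-B))) :=
          mul_le_mul_of_nonneg_left (h3 t (le_of_lt ht)) (Real.exp_pos _).le
      _ = (C₂ * Real.exp (-(κ₂*B))) * Real.exp ((c+κ₂)*t) := by
          rw [show Real.exp (c*t) * (C₂ * Real.exp (κ₂*(t-B)))
              = C₂ * (Real.exp (c*t) * Real.exp (κ₂*(t-B))) from by ring, key2 t]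
          ring
  have huniv : IntegrableOn f univ := by
    have e1 : Iic A ∪ Ioc A B = Iic B := Iic_union_Ioc_eq_Iic hAB
    have e2 : Iic B ∪ Ioi B = univ := Iic_union_Ioi
    rw [← e2, ← e1]
    exact (hIic.union hIoc).union hIoi
  exact integrableOn_univ.1 huniv

end PFAux5

namespace PFAux6
variable {Λ : ℝ → ℝ}

lemma all_exponential (hSall : ∀ t, 0 < Λ t)
    (hnogap : ∀ h x y : ℝ, 0 < h → x + h ≤ y → Λ x * Λ (y+h) = Λ (x+h) * Λ y)
    {Mb : ℝ} (hMbdd : ∀ t ∈ Icc (0:ℝ) 1, Λ t ≤ Mb) :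
    ∃ a b : ℝ, ∀ t, Λ t = Real.exp (a*t + b) := by
  set F : ℝ → ℝ := fun t => Real.log (Λ t) with hFdef
  have hF : ∀ x h y : ℝ, 0 < h → x + h ≤ y → F (x+h) - F x = F (y+h) - F y := by
    intro x h y hh hxy
    have := hnogap h x y hh hxy
    have hlog : F x + F (y+h) = F (x+h) + F y := by
      have l1 := Real.log_mul (hSall x).ne' (hSall (y+h)).ne'
      have l2 := Real.log_mul (hSall (x+h)).ne' (hSall y).ne'
      simp only [hFdef]
      rw [← l1, ← l2, this]
    linarith
  set G : ℝ → ℝ := fun t => F t - F 0 with hGdef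
  have hshift : ∀ x h : ℝ, 0 < h → F (x + h) = F x + G h := by
    intro x h hh
    set Y : ℝ := max x 0 + h with hY
    have h1 : F (x+h) - F x = F (Y+h) - F Y :=
      hF x h Y hh (by simp only [hY]; linarith [le_max_left x 0, hh.le])
    have h2 : F (0+h) - F 0 = F (Y+h) - F Y :=
      hF 0 h Y hh (by simp only [hY]; linarith [le_max_right x 0, hh.le])
    simp only [zero_add] at h2
    simp only [hGdef]
    linarith
  have hshift' : ∀ x h : ℝ, F (x + h) = F x + G h := by
    intro x h
    rcases lt_trichotomy h 0 with hh | hh | hh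
    · have e1 : F ((x+h) + (-h)) = F (x+h) + G (-h) := hshift (x+h) (-h) (by linarith)
      have e2 : F (h + (-h)) = F h + G (-h) := hshift h (-h) (by linarith)
      simp only [add_neg_cancel] at e2
      have e3 : (x+h) + (-h) = x := by ring
      rw [e3] at e1
      simp only [hGdef] at e1 e2 ⊢
      linarith
    · simp [hh, hGdef]
    · exact hshift x h hh
  have hGadd : ∀ s t : ℝ, G (s + t) = G s + G t := by
    intro s t
    have h1 : F (s + t) = F s + G t := hshift' s t
    have h2 : F (0 + s) = F 0 + G s := hshift' 0 s
    simp only [zero_add] at h2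
    simp only [hGdef] at h1 h2 ⊢
    linarith
  set a : ℝ := G 1 with hadef
  set H : ℝ → ℝ := fun t => G t - a*t with hHdef
  have hHadd : ∀ s t : ℝ, H (s + t) = H s + H t := by
    intro s t
    simp only [hHdef, hGadd s t]
    ring
  have hH0 : H 0 = 0 := by
    have := hHadd 0 0
    simp only [add_zero] at this
    linarith
  have hHneg : ∀ t, H (-t) = - H t := by
    intro t
    have := hHadd t (-t)
    simp only [add_neg_cancel, hH0] at this
    linarith
  have hH1 : H 1 = 0 := by simp [hHdef, hadef]
  have hHnat : ∀ (n : ℕ) (t : ℝ), H ((n:ℝ)*t) = n * H t := by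
    intro n
    induction n with
    | zero => intro t; simpa using hH0
    | succ k ih =>
      intro t
      have e : ((k:ℝ)+1)*t = (k:ℝ)*t + t := by ring
      push_cast
      rw [e, hHadd, ih t]
      ring
  have hHint : ∀ m : ℤ, H (m:ℝ) = 0 := by
    intro m
    rcases le_or_gt 0 m with hm | hm
    · obtain ⟨n, rfl⟩ := Int.eq_ofNat_of_zero_le hm
      have := hHnat n 1
      simp only [mul_one, hH1, mul_zero] at this
      exact_mod_cast this
    · obtain ⟨n, rfl⟩ : ∃ n : ℕ, m = -(n:ℤ) := ⟨m.natAbs, by omega⟩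
      have h1 := hHnat n 1
      simp only [mul_one, hH1, mul_zero] at h1
      push_cast
      rw [hHneg]
      simp [h1]
  have hMb0 : 0 < Mb := lt_of_lt_of_le (hSall 0) (hMbdd 0 ⟨le_refl _, zero_le_one⟩)
  set C : ℝ := Real.log Mb - F 0 + |a| with hCdef
  have hHb : ∀ t ∈ Icc (0:ℝ) 1, H t ≤ C := by
    intro t ht
    have h1 : F t ≤ Real.log Mb := Real.log_le_log (hSall t) (hMbdd t ht)
    have h2 : a * t ≥ -|a| := by
      have : |a*t| ≤ |a| := by
        rw [abs_mul]
        calc |a| * |t| ≤ |a| * 1 := by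
              apply mul_le_mul_of_nonneg_left _ (abs_nonneg a)
              rw [abs_le]; constructor <;> linarith [ht.1, ht.2]
          _ = |a| := mul_one _
      linarith [neg_abs_le (a*t)]
    simp only [hHdef, hGdef, hCdef]
    linarith
  have hHzero : ∀ t, H t = 0 := by
    have hle : ∀ t, H t ≤ 0 := by
      intro t
      by_contra hc
      push_neg at hc
      obtain ⟨n, hn⟩ := exists_nat_gt (C / H t)
      have hnH : C < n * H t := by
        rw [div_lt_iff₀ hc] at hn
        linarith
      set z : ℝ := (n:ℝ) * t with hz
      set m : ℤ := ⌈z⌉ with hm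
      have hm1 : (m:ℝ) - 1 < z := by
        have := Int.ceil_lt_add_one z
        push_cast at this ⊢
        linarith [Int.le_ceil z]
      have hm2 : z ≤ m := Int.le_ceil z
      have hin : z + (1 - (m:ℝ)) ∈ Icc (0:ℝ) 1 := ⟨by linarith, by linarith⟩
      have hcalc : H (z + (1 - (m:ℝ))) = n * H t := by
        have e : (1 - (m:ℝ)) = ((1 - m : ℤ) : ℝ) := by push_cast; ring
        rw [hHadd z (1 - (m:ℝ)), e, hHint (1 - m), hz, hHnat n t]
        ring
      have := hHb _ hin
      rw [hcalc] at this
      linarith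
    intro t
    have h1 := hle t
    have h2 := hle (-t)
    rw [hHneg] at h2
    linarith
  refine ⟨a, F 0, fun t => ?_⟩
  have hGt : G t = a * t := by
    have := hHzero t
    simp only [hHdef] at this
    linarith
  have hFt : F t = a*t + F 0 := by
    simp only [hGdef] at hGt
    linarith
  rw [← hFt, hFdef]
  exact (Real.exp_log (hSall t)).symm

end PFAux6

namespace PFAux7
open PFAux
variable {Λ : ℝ → ℝ}

lemma pos_between (hnn : ∀ t, 0 ≤ Λ t)
    (hK : ∀ {x p q y : ℝ}, x < p → p ≤ q → q < y → p + q = x + y → Λ x * Λ y ≤ Λ p * Λ q)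
    {p q m : ℝ} (hp : 0 < Λ p) (hq : 0 < Λ q) (h1 : p < m) (h2 : m < q) : 0 < Λ m := by
  rcases le_total m (p + q - m) with h | h
  · have hkey := hK (x := p) (p := m) (q := p + q - m) (y := q) h1 h (by linarith) (by ring)
    nlinarith [mul_pos hp hq, hnn m, hnn (p + q - m)]
  · have hkey := hK (x := p) (p := p + q - m) (q := m) (y := q) (by linarith) h h2 (by ring)
    nlinarith [mul_pos hp hq, hnn m, hnn (p + q - m)]

end PFAux7

namespace PFAux8

lemma TP_exp_mul {Λ : ℝ → ℝ}
    (hTP : Measurable Λ ∧ ∀ (n : ℕ) (x y : Fin n → ℝ), StrictMono x → StrictMono y →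
      0 ≤ (Matrix.of fun j k => Λ (x j - y k)).det) (c : ℝ) :
    Measurable (fun x => Real.exp (c*x) * Λ x) ∧
      ∀ (n : ℕ) (x y : Fin n → ℝ), StrictMono x → StrictMono y →
      0 ≤ (Matrix.of fun j k => (fun x => Real.exp (c*x) * Λ x) (x j - y k)).det := by
  constructor
  · exact (Real.measurable_exp.comp (measurable_id.const_mul c)).mul hTP.1
  · intro n x y hx hy
    have hdet := hTP.2 n x y hx hy
    have hmat : (Matrix.of fun j k => Real.exp (c*(x j - y k)) * Λ (x j - y k)) =
        Matrix.diagonal (fun j => Real.exp (c * x j)) *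
          (Matrix.of fun j k => Λ (x j - y k)) *
          Matrix.diagonal (fun k => Real.exp (-(c * y k))) := by
      ext j k
      rw [Matrix.mul_diagonal, Matrix.diagonal_mul, Matrix.of_apply, Matrix.of_apply]
      rw [show c*(x j - y k) = c*x j + -(c*y k) by ring, Real.exp_add]
      ring
    show 0 ≤ (Matrix.of fun j k => Real.exp (c*(x j - y k)) * Λ (x j - y k)).det
    rw [hmat, Matrix.det_mul, Matrix.det_mul, Matrix.det_diagonal, Matrix.det_diagonal]
    have hp1 : (0:ℝ) < ∏ j, Real.exp (c * x j) :=
      Finset.prod_pos fun j _ => Real.exp_pos _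
    have hp2 : (0:ℝ) < ∏ k, Real.exp (-(c * y k)) :=
      Finset.prod_pos fun k _ => Real.exp_pos _
    exact mul_nonneg (mul_nonneg hp1.le hdet) hp2.le

end PFAux8

namespace PFMain
open PFAux PFAux2 PFAux3 PFAux4 PFAux5 PFAux6 PFAux7
variable {Λ : ℝ → ℝ}

lemma exists_integrable (hmeas : Measurable Λ) (hnn : ∀ t, 0 ≤ Λ t)
    (hK : ∀ {x p q y : ℝ}, x < p → p ≤ q → q < y → p + q = x + y → Λ x * Λ y ≤ Λ p * Λ q)
    {ε a₀ b₀ : ℝ} (hε : 0 < ε) (hab : a₀ < b₀) (hwin : ∀ t ∈ Ioo a₀ b₀, ε ≤ Λ t)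
    (hnexp : ¬ ∃ a b : ℝ, ∀ x : ℝ, Λ x = Real.exp (a * x + b)) :
    ∃ c : ℝ, Integrable (fun t => Real.exp (c * t) * Λ t) := by
  set u : ℝ := a₀ + (b₀ - a₀)/4 with hudef
  set v : ℝ := b₀ - (b₀ - a₀)/4 with hvdef
  have huv : u < v := by simp only [hudef, hvdef]; linarith
  have hu : 0 < Λ u := lt_of_lt_of_le hε (hwin u ⟨by simp only [hudef]; linarith,
    by simp only [hudef]; linarith⟩)
  have hv : 0 < Λ v := lt_of_lt_of_le hε (hwin v ⟨by simp only [hvdef]; linarith,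
    by simp only [hvdef]; linarith⟩)
  have hbdd : ∀ aa bb : ℝ, ∃ M, ∀ t ∈ Icc aa bb, Λ t ≤ M :=
    bdd_on_Icc hmeas hnn hK hu hv huv.ne
  by_cases hgap : ∃ h x y : ℝ, 0 < h ∧ x + h ≤ y ∧ Λ x * Λ (y+h) < Λ (x+h) * Λ y
  · obtain ⟨h, x, y, hh, hxy, hlt⟩ := hgap
    have hR : 0 < Λ (x+h) * Λ y := lt_of_le_of_lt (mul_nonneg (hnn x) (hnn (y+h))) hlt
    have hxh : 0 < Λ (x+h) := by
      rcases mul_pos_iff.1 hR with ⟨h1, _⟩ | ⟨h1, _⟩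
      · exact h1
      · linarith [hnn (x+h)]
    have hy : 0 < Λ y := by
      rcases mul_pos_iff.1 hR with ⟨_, h2⟩ | ⟨_, h2⟩
      · exact h2
      · linarith [hnn y]
    by_cases hx0 : Λ x = 0
    · -- support bounded below by x
      have hzero : ∀ t, t < x → Λ t = 0 := by
        intro t ht
        by_contra hc
        have htpos : 0 < Λ t := lt_of_le_of_ne (hnn t) (Ne.symm hc)
        have := pos_between hnn hK htpos hxh ht (by linarith)
        exact absurd this (by rw [hx0]; exact lt_irrefl 0)
      have hxu : x ≤ u := by
        by_contra hc
        push_neg at hc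
        exact absurd (hzero u hc) hu.ne'
      obtain ⟨M, hM⟩ := hbdd v (v + (v-u))
      have htail := tailR hnn hK hu hv huv hM
      set κ : ℝ := Real.log (Λ v / Λ u) / (v-u) with hκdef
      set C₂ : ℝ := M * Real.exp (|κ| * (v-u)) with hC₂def
      obtain ⟨M₂, hM₂⟩ := hbdd (x-1) v
      refine ⟨-κ - 1, integrable_piecewise hmeas hnn (A := x-1) (B := v)
        (C₁ := 0) (C₂ := C₂) (M := M₂) (κ₁ := κ + 2) (κ₂ := κ)
        (by linarith) (by ring_nf; norm_num) (by ring_nf; norm_num) ?_ hM₂ ?_⟩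
      · intro t ht
        rw [hzero t (by linarith)]
        positivity
      · intro t ht
        exact htail t ht
    · by_cases hy0 : Λ (y+h) = 0
      · -- support bounded above by y+h
        have hzero : ∀ t, y + h < t → Λ t = 0 := by
          intro t ht
          by_contra hc
          have htpos : 0 < Λ t := lt_of_le_of_ne (hnn t) (Ne.symm hc)
          have := pos_between hnn hK hy htpos (by linarith) ht
          exact absurd this (by rw [hy0]; exact lt_irrefl 0)
        have hvy : v ≤ y + h := by
          by_contra hc
          push_neg at hc
          exact absurd (hzero v hc) hv.ne'
        obtain ⟨M, hM⟩ := hbdd (u - (v-u)) u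
        have htail := tailL hnn hK hu hv huv hM
        set κ : ℝ := Real.log (Λ v / Λ u) / (v-u) with hκdef
        set C₁ : ℝ := M * Real.exp (|κ| * (v-u)) with hC₁def
        obtain ⟨M₂, hM₂⟩ := hbdd u (y+h+1)
        refine ⟨-κ + 1, integrable_piecewise hmeas hnn (A := u) (B := y+h+1)
          (C₁ := C₁) (C₂ := 0) (M := M₂) (κ₁ := κ) (κ₂ := κ - 2)
          (by linarith) (by ring_nf; norm_num) (by ring_nf; norm_num) ?_ hM₂ ?_⟩
        · intro t ht
          exact htail t ht
        · intro t ht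
          rw [hzero t (by linarith)]
          positivity
      · -- four positive points, strict slope drop
        have hx : 0 < Λ x := lt_of_le_of_ne (hnn x) (Ne.symm hx0)
        have hyh : 0 < Λ (y+h) := lt_of_le_of_ne (hnn (y+h)) (Ne.symm hy0)
        have hxxh : x < x + h := by linarith
        have hyyh : y < y + h := by linarith
        set κ₁ : ℝ := Real.log (Λ (x+h) / Λ x) / ((x+h)-x) with hκ₁def
        set κ₂ : ℝ := Real.log (Λ (y+h) / Λ y) / ((y+h)-y) with hκ₂def
        have hκlt : κ₂ < κ₁ := by
          have hdiv : Λ (y+h)/Λ y < Λ (x+h)/Λ x := by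
            rw [div_lt_div_iff₀ hy hx]
            nlinarith
          have hlog := Real.log_lt_log (div_pos hyh hy) hdiv
          simp only [hκ₁def, hκ₂def]
          rw [div_lt_div_iff₀ (by linarith) (by linarith)]
          nlinarith
        obtain ⟨M₁, hM₁⟩ := hbdd (x - ((x+h)-x)) x
        have htailL := tailL hnn hK hx hxh hxxh hM₁
        obtain ⟨M₂, hM₂⟩ := hbdd (y+h) ((y+h) + ((y+h)-y))
        have htailR := tailR hnn hK hy hyh hyyh hM₂
        obtain ⟨M₃, hM₃⟩ := hbdd x (y+h)
        refine ⟨-(κ₁+κ₂)/2, integrable_piecewise hmeas hnn (A := x) (B := y+h)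
          (C₁ := M₁ * Real.exp (|κ₁| * ((x+h)-x))) (C₂ := M₂ * Real.exp (|κ₂| * ((y+h)-y)))
          (M := M₃) (κ₁ := κ₁) (κ₂ := κ₂)
          (by linarith) (by linarith) (by linarith) ?_ hM₃ ?_⟩
        · intro t ht
          exact htailL t ht
        · intro t ht
          exact htailR t ht
  · -- no gap : equality everywhere
    push_neg at hgap
    have heq : ∀ h x y : ℝ, 0 < h → x + h ≤ y → Λ x * Λ (y+h) = Λ (x+h) * Λ y := by
      intro h x y hh hxy
      refine le_antisymm ?_ (hgap h x y hh hxy)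
      have := hK (x := x) (p := x+h) (q := y) (y := y+h) (by linarith) hxy (by linarith)
        (by ring)
      linarith
    by_cases hSup : ∀ r : ℝ, ∃ t, r < t ∧ 0 < Λ t
    · by_cases hSdown : ∀ r : ℝ, ∃ t, t < r ∧ 0 < Λ t
      · -- positive everywhere : exponential, contradiction
        exfalso
        have hSall : ∀ t, 0 < Λ t := by
          intro t
          obtain ⟨p, hp1, hp2⟩ := hSdown t
          obtain ⟨q, hq1, hq2⟩ := hSup t
          exact pos_between hnn hK hp2 hq2 hp1 hq1
        obtain ⟨Mb, hMb⟩ := hbdd 0 1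
        exact hnexp (all_exponential hSall heq hMb)
      · -- support bounded below
        push_neg at hSdown
        obtain ⟨r, hr⟩ := hSdown
        have hzero : ∀ t, t < r → Λ t = 0 := by
          intro t ht
          have := hr t ht
          linarith [hnn t]
        have hru : r ≤ u := by
          by_contra hc
          push_neg at hc
          exact absurd (hzero u hc) hu.ne'
        obtain ⟨M, hM⟩ := hbdd v (v + (v-u))
        have htail := tailR hnn hK hu hv huv hM
        set κ : ℝ := Real.log (Λ v / Λ u) / (v-u) with hκdef
        obtain ⟨M₂, hM₂⟩ := hbdd (r-1) v
        refine ⟨-κ - 1, integrable_piecewise hmeas hnn (A := r-1) (B := v)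
          (C₁ := 0) (C₂ := M * Real.exp (|κ| * (v-u))) (M := M₂) (κ₁ := κ + 2) (κ₂ := κ)
          (by linarith) (by ring_nf; norm_num) (by ring_nf; norm_num) ?_ hM₂ ?_⟩
        · intro t ht
          rw [hzero t (by linarith)]
          positivity
        · intro t ht
          exact htail t ht
    · -- support bounded above
      push_neg at hSup
      obtain ⟨r, hr⟩ := hSup
      have hzero : ∀ t, r < t → Λ t = 0 := by
        intro t ht
        have := hr t ht
        linarith [hnn t]
      have hvr : v ≤ r := by
        by_contra hc
        push_neg at hc
        exact absurd (hzero v hc) hv.ne'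
      obtain ⟨M, hM⟩ := hbdd (u - (v-u)) u
      have htail := tailL hnn hK hu hv huv hM
      set κ : ℝ := Real.log (Λ v / Λ u) / (v-u) with hκdef
      obtain ⟨M₂, hM₂⟩ := hbdd u (r+1)
      refine ⟨-κ + 1, integrable_piecewise hmeas hnn (A := u) (B := r+1)
        (C₁ := M * Real.exp (|κ| * (v-u))) (C₂ := 0) (M := M₂) (κ₁ := κ) (κ₂ := κ - 2)
        (by linarith) (by ring_nf; norm_num) (by ring_nf; norm_num) ?_ hM₂ ?_⟩
      · intro t ht
        exact htail t ht
      · intro t ht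
        rw [hzero t (by linarith)]
        positivity

end PFMain

/-- A totally positive function which is not a.e. zero and not a pure exponential becomes
integrable (hence a Pólya frequency function) after multiplication by a suitable
exponential `e^{cx}`. -/
theorem exists_exponential_mul_polyaFrequency (Λ : ℝ → ℝ) (hTP : TotallyPositive Λ)
    (hne : ¬ (∀ᵐ x : ℝ, Λ x = 0))
    (hnexp : ¬ ∃ a b : ℝ, ∀ x : ℝ, Λ x = Real.exp (a * x + b)) :
    ∃ c : ℝ, PolyaFrequency (fun x => Real.exp (c * x) * Λ x) := by
  have hmeas := hTP.1
  have hnn : ∀ t, 0 ≤ Λ t := PFAux.nonneg hTP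
  have hK : ∀ {x p q y : ℝ}, x < p → p ≤ q → q < y → p + q = x + y →
      Λ x * Λ y ≤ Λ p * Λ q := fun h1 h2 h3 h4 => PFAux.keyIneq hTP h1 h2 h3 h4
  obtain ⟨ε, hε, a₀, b₀, hab, hwin⟩ := PFAux.lower_window hmeas hnn hK hne
  obtain ⟨c, hint⟩ := PFMain.exists_integrable hmeas hnn hK hε hab hwin hnexp
  refine ⟨c, PFAux8.TP_exp_mul hTP c, hint, ?_⟩
  intro hae
  apply hne
  filter_upwards [hae] with x hx
  rcases mul_eq_zero.1 hx with h | h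
  · exact absurd h (Real.exp_ne_zero _)
  · exact h
end

section
/- If Λ₁ and Λ₂ are Pólya frequency functions, then their convolution Λ(x) = ∫_{-∞}^{∞} Λ₁(x − t) Λ₂(t) dt is again a Pólya frequency function. -/
open MeasureTheory Complex

namespace PFAux

lemma tp_nonneg {Λ : ℝ → ℝ} (h : TotallyPositive Λ) (u : ℝ) : 0 ≤ Λ u := by
  have := h.2 1 (fun _ => u) (fun _ => 0) (Subsingleton.strictMono _) (Subsingleton.strictMono _)
  simpa [Matrix.det_fin_one] using this

lemma tp_mid {Λ : ℝ → ℝ} (h : TotallyPositive Λ) (a b : ℝ) (hab : a ≤ b) :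
    Λ a * Λ b ≤ Λ ((a + b) / 2) ^ 2 := by
  rcases eq_or_lt_of_le hab with rfl | hab
  · have e : (a + a) / 2 = a := by ring
    rw [e, sq]
  · have hx : StrictMono ![(0 : ℝ), (b - a) / 2] := by
      intro i j hij
      fin_cases i <;> fin_cases j <;> simp_all <;> linarith
    have hy : StrictMono ![-((a + b) / 2), -a] := by
      intro i j hij
      fin_cases i <;> fin_cases j <;> simp_all <;> linarith
    have key := h.2 2 ![(0 : ℝ), (b - a) / 2] ![-((a + b) / 2), -a] hx hy
    rw [Matrix.det_fin_two] at key
    simp only [Matrix.of_apply, Matrix.cons_val', Matrix.cons_val_zero, Matrix.cons_val_one,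
      Matrix.head_cons, Matrix.empty_val', Matrix.cons_val_fin_one] at key
    have e0 : (0 : ℝ) - -((a + b) / 2) = (a + b) / 2 := by ring
    have e1 : (b - a) / 2 - -a = (a + b) / 2 := by ring
    have e2 : (0 : ℝ) - -a = a := by ring
    have e3 : (b - a) / 2 - -((a + b) / 2) = b := by ring
    rw [e0, e1, e2, e3] at key
    rw [sq]
    linarith

lemma pf_bounded {Λ : ℝ → ℝ} (h : PolyaFrequency Λ) : ∃ B : ℝ, ∀ u, Λ u ≤ B := by
  obtain ⟨htp, hint, hne⟩ := h
  have hmeas : Measurable Λ := htp.1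
  have hnn : ∀ u, 0 ≤ Λ u := tp_nonneg htp
  have hmid : ∀ a b : ℝ, a ≤ b → Λ a * Λ b ≤ Λ ((a + b) / 2) ^ 2 := tp_mid htp
  obtain ⟨c, hc, hP⟩ : ∃ c : ℝ, 0 < c ∧ 0 < volume {t | c ≤ Λ t} := by
    by_contra hcon
    push_neg at hcon
    have hnull : ∀ n : ℕ, volume {t | (1 : ℝ) / (n + 1) ≤ Λ t} = 0 := fun n =>
      le_antisymm (hcon _ (by positivity)) zero_le
    apply hne
    have hsub : {t | Λ t ≠ 0} ⊆ ⋃ n : ℕ, {t | (1 : ℝ) / (n + 1) ≤ Λ t} := by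
      intro t ht
      have hpos : 0 < Λ t := lt_of_le_of_ne (hnn t) (Ne.symm ht)
      obtain ⟨n, hn⟩ := exists_nat_one_div_lt hpos
      exact Set.mem_iUnion.2 ⟨n, le_of_lt hn⟩
    have h0 : volume {t | Λ t ≠ 0} = 0 :=
      measure_mono_null hsub (measure_iUnion_null hnull)
    exact ae_iff.2 h0
  set P := {t | c ≤ Λ t} with hPdef
  have hPmeas : MeasurableSet P := measurableSet_le measurable_const hmeas
  have hPfin : volume P < ⊤ := hint.measure_ge_lt_top hc
  set κ := (volume P / 2).toReal with hκdef
  have hκpos : 0 < κ := ENNReal.toReal_pos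
    (by simp [ENNReal.div_eq_zero_iff]; exact hP.ne')
    ((ENNReal.div_lt_top hPfin.ne (by norm_num)).ne)
  refine ⟨((∫ t, Λ t) / κ) ^ 2 / c, fun m => ?_⟩
  set T := (fun u : ℝ => 2 * u - m) ⁻¹' P with hTdef
  have hTmeas : MeasurableSet T :=
    hPmeas.preimage ((measurable_const.mul measurable_id).sub measurable_const)
  have hTvol : volume T = volume P / 2 := by
    have hTeq : T = (2 * ·) ⁻¹' ((· + -m) ⁻¹' P) := by
      ext u; simp [hTdef, sub_eq_add_neg]
    rw [hTeq, Real.volume_preimage_mul_left (two_ne_zero), measure_preimage_add_right]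
    rw [show |(2 : ℝ)⁻¹| = 2⁻¹ by norm_num, ENNReal.ofReal_inv_of_pos (by norm_num),
      ENNReal.div_eq_inv_mul]
    norm_num
  have lower : ∀ u ∈ T, Real.sqrt (c * Λ m) ≤ Λ u := by
    intro u hu
    have hb : c ≤ Λ (2 * u - m) := hu
    have hcm : c * Λ m ≤ Λ u ^ 2 := by
      rcases le_total m (2 * u - m) with h | h
      · have hm2 := hmid m (2 * u - m) h
        rw [show (m + (2 * u - m)) / 2 = u by ring] at hm2
        have : c * Λ m ≤ Λ (2 * u - m) * Λ m :=
          mul_le_mul_of_nonneg_right hb (hnn m)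
        nlinarith
      · have hm2 := hmid (2 * u - m) m h
        rw [show (2 * u - m + m) / 2 = u by ring] at hm2
        have : c * Λ m ≤ Λ (2 * u - m) * Λ m :=
          mul_le_mul_of_nonneg_right hb (hnn m)
        nlinarith
    calc Real.sqrt (c * Λ m) ≤ Real.sqrt (Λ u ^ 2) := Real.sqrt_le_sqrt hcm
      _ = Λ u := by rw [Real.sqrt_sq (hnn u)]
  have hTfin : volume T ≠ ⊤ := by
    rw [hTvol]; exact (ENNReal.div_lt_top hPfin.ne (by norm_num)).ne
  have hlb := setIntegral_ge_of_const_le_real hTmeas hTfin lower hint.integrableOn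
  have hub := setIntegral_le_integral (s := T) hint (Filter.Eventually.of_forall hnn)
  have hκT : volume.real T = κ := by rw [Measure.real, hTvol]
  rw [hκT] at hlb
  have hsq : Real.sqrt (c * Λ m) ≤ (∫ t, Λ t) / κ := by
    rw [le_div_iff₀ hκpos]; linarith
  have h2 : c * Λ m ≤ ((∫ t, Λ t) / κ) ^ 2 := by
    have := pow_le_pow_left₀ (Real.sqrt_nonneg _) hsq 2
    rwa [Real.sq_sqrt (mul_nonneg hc.le (hnn m))] at this
  rw [le_div_iff₀ hc]
  linarith

lemma dets_nonneg {Λ₁ Λ₂ : ℝ → ℝ} (h₁ : TotallyPositive Λ₁) (h₂ : TotallyPositive Λ₂)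
    {n : ℕ} {x y : Fin n → ℝ} (hx : StrictMono x) (hy : StrictMono y) (s : Fin n → ℝ) :
    0 ≤ (Matrix.of fun j k => Λ₁ (x j - s k)).det * (Matrix.of fun j k => Λ₂ (s j - y k)).det := by
  by_cases hs : Function.Injective s
  · set τ := Tuple.sort s with hτ
    have hmono : StrictMono (s ∘ τ) :=
      (Tuple.monotone_sort s).strictMono_of_injective (hs.comp τ.injective)
    have hA : ((Matrix.of fun j k => Λ₁ (x j - s k)).submatrix id τ).det =
        ((Equiv.Perm.sign τ : ℤ) : ℝ) * (Matrix.of fun j k => Λ₁ (x j - s k)).det :=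
      Matrix.det_permute' τ _
    have hB : ((Matrix.of fun j k => Λ₂ (s j - y k)).submatrix τ id).det =
        ((Equiv.Perm.sign τ : ℤ) : ℝ) * (Matrix.of fun j k => Λ₂ (s j - y k)).det :=
      Matrix.det_permute τ _
    have hA' : (Matrix.of fun j k => Λ₁ (x j - (s ∘ τ) k)).det =
        ((Matrix.of fun j k => Λ₁ (x j - s k)).submatrix id τ).det := rfl
    have hB' : (Matrix.of fun j k => Λ₂ ((s ∘ τ) j - y k)).det =
        ((Matrix.of fun j k => Λ₂ (s j - y k)).submatrix τ id).det := rfl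
    have p1 := h₁.2 n x (s ∘ τ) hx hmono
    have p2 := h₂.2 n (s ∘ τ) y hmono hy
    rw [hA', hA] at p1
    rw [hB', hB] at p2
    have hsgn : ((Equiv.Perm.sign τ : ℤ) : ℝ) * ((Equiv.Perm.sign τ : ℤ) : ℝ) = 1 := by
      rcases Int.units_eq_one_or (Equiv.Perm.sign τ) with h | h <;> rw [h] <;> norm_num
    nlinarith [mul_nonneg p1 p2]
  · rw [Function.not_injective_iff] at hs
    obtain ⟨j, k, hjk, hne⟩ := hs
    have : (Matrix.of fun j k => Λ₁ (x j - s k)).det = 0 :=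
      Matrix.det_zero_of_column_eq hne fun i => by simp [hjk]
    simp [this]

lemma conv_det_nonneg {Λ₁ Λ₂ : ℝ → ℝ} (h₁ : TotallyPositive Λ₁) (h₂ : TotallyPositive Λ₂)
    (hint₂ : Integrable Λ₂) (B₁ : ℝ) (hB₁ : ∀ u, Λ₁ u ≤ B₁)
    (hnn₁ : ∀ u, 0 ≤ Λ₁ u) (hnn₂ : ∀ u, 0 ≤ Λ₂ u)
    {n : ℕ} (x y : Fin n → ℝ) (hx : StrictMono x) (hy : StrictMono y) :
    0 ≤ (Matrix.of fun j k => ∫ t : ℝ, Λ₁ (x j - y k - t) * Λ₂ t).det := by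
  classical
  set f : Fin n → Fin n → ℝ → ℝ := fun j k t => Λ₁ (x j - t) * Λ₂ (t - y k) with hf
  have hfint : ∀ j k, Integrable (f j k) := by
    intro j k
    have hg : Integrable (fun t => B₁ * Λ₂ (t - y k)) := (hint₂.comp_sub_right (y k)).const_mul _
    refine hg.mono' ?_ ?_
    · exact ((h₁.1.comp (measurable_const.sub measurable_id)).mul
        (h₂.1.comp (measurable_id.sub measurable_const))).aestronglyMeasurable
    · refine Filter.Eventually.of_forall fun t => ?_
      rw [Real.norm_eq_abs, _root_.abs_of_nonneg (mul_nonneg (hnn₁ _) (hnn₂ _))]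
      exact mul_le_mul_of_nonneg_right (hB₁ _) (hnn₂ _)
  have entry : ∀ j k, (∫ t : ℝ, Λ₁ (x j - y k - t) * Λ₂ t) = ∫ t, f j k t := by
    intro j k
    have h := integral_sub_right_eq_self (μ := volume)
      (fun t => Λ₁ (x j - y k - t) * Λ₂ t) (y k)
    rw [← h]
    simp only [hf, sub_sub_sub_cancel_right]
  have det_rw : (Matrix.of fun j k => ∫ t : ℝ, Λ₁ (x j - y k - t) * Λ₂ t).det
      = ∑ σ : Equiv.Perm (Fin n), ((Equiv.Perm.sign σ : ℤ) : ℝ) * ∏ i, ∫ t, f (σ i) i t := by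
    rw [Matrix.det_apply']
    exact Finset.sum_congr rfl fun σ _ => by
      rw [show (∏ i, (Matrix.of fun j k => ∫ t : ℝ, Λ₁ (x j - y k - t) * Λ₂ t) (σ i) i)
          = ∏ i, ∫ t, f (σ i) i t from Finset.prod_congr rfl fun i _ => entry (σ i) i]
  set F : (Fin n → ℝ) → ℝ := fun s => ∑ σ : Equiv.Perm (Fin n),
      ((Equiv.Perm.sign σ : ℤ) : ℝ) * ∏ i, f (σ i) i (s i) with hF
  have hFterm_int : ∀ σ : Equiv.Perm (Fin n),
      Integrable (fun s : Fin n → ℝ => ((Equiv.Perm.sign σ : ℤ) : ℝ) * ∏ i, f (σ i) i (s i)) :=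
    fun σ => (Integrable.fintype_prod (f := fun i => f (σ i) i) fun i => hfint _ _).const_mul _
  have hFint : Integrable F := integrable_finset_sum _ fun σ _ => hFterm_int σ
  have det_eq : (Matrix.of fun j k => ∫ t : ℝ, Λ₁ (x j - y k - t) * Λ₂ t).det = ∫ s, F s := by
    rw [det_rw, hF, integral_finset_sum _ fun σ _ => hFterm_int σ]
    refine Finset.sum_congr rfl fun σ _ => ?_
    rw [integral_const_mul, ← integral_fintype_prod_eq_prod (ι := Fin n) (fun i => f (σ i) i)]
    rfl
  rw [det_eq]
  have hFeq : ∀ s : Fin n → ℝ, F s =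
      (Matrix.of fun j k => Λ₁ (x j - s k)).det * ∏ i, Λ₂ (s i - y i) := by
    intro s
    rw [hF, Matrix.det_apply', Finset.sum_mul]
    refine Finset.sum_congr rfl fun σ _ => ?_
    rw [mul_assoc]
    congr 1
    rw [← Finset.prod_mul_distrib]
    rfl
  have hcomp : ∀ (τ : Equiv.Perm (Fin n)) (s : Fin n → ℝ),
      (MeasurableEquiv.piCongrLeft (fun _ : Fin n => ℝ) τ.symm) s = s ∘ τ := by
    intro τ s; funext j
    rw [MeasurableEquiv.coe_piCongrLeft]
    conv_lhs => rw [show j = τ.symm (τ j) from (Equiv.symm_apply_apply τ j).symm]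
    rw [Equiv.piCongrLeft_apply_apply]
    rfl
  have perm_int : ∀ τ : Equiv.Perm (Fin n), ∫ s : Fin n → ℝ, F (s ∘ τ) = ∫ s, F s := by
    intro τ
    have hmp := MeasureTheory.volume_measurePreserving_piCongrLeft (fun _ : Fin n => ℝ) τ.symm
    calc ∫ s : Fin n → ℝ, F (s ∘ τ)
        = ∫ s : Fin n → ℝ, F ((MeasurableEquiv.piCongrLeft (fun _ : Fin n => ℝ) τ.symm) s) := by
          congr 1; funext s; rw [hcomp]
      _ = ∫ s, F s := hmp.integral_comp' F
  have perm_integrable : ∀ τ : Equiv.Perm (Fin n),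
      Integrable (fun s : Fin n → ℝ => F (s ∘ τ)) := by
    intro τ
    have hmp := MeasureTheory.volume_measurePreserving_piCongrLeft (fun _ : Fin n => ℝ) τ.symm
    have h := (hmp.integrable_comp_emb (MeasurableEquiv.measurableEmbedding _)).2 hFint
    have hfun : (fun s : Fin n → ℝ => F (s ∘ τ))
        = F ∘ (MeasurableEquiv.piCongrLeft (fun _ : Fin n => ℝ) τ.symm) := by
      funext s; simp [Function.comp, hcomp]
    rw [hfun]; exact h
  have sum_perm : ∑ τ : Equiv.Perm (Fin n), ∫ s : Fin n → ℝ, F (s ∘ τ)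
      = ∫ s : Fin n → ℝ, ∑ τ : Equiv.Perm (Fin n), F (s ∘ τ) :=
    (integral_finset_sum _ fun τ _ => perm_integrable τ).symm
  have point : ∀ s : Fin n → ℝ, ∑ τ : Equiv.Perm (Fin n), F (s ∘ τ)
      = (Matrix.of fun j k => Λ₁ (x j - s k)).det *
        (Matrix.of fun j k => Λ₂ (s j - y k)).det := by
    intro s
    have hterm : ∀ τ : Equiv.Perm (Fin n), F (s ∘ τ)
        = (Matrix.of fun j k => Λ₁ (x j - s k)).det *
          (((Equiv.Perm.sign τ : ℤ) : ℝ) * ∏ i, Λ₂ (s (τ i) - y i)) := by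
      intro τ
      rw [hFeq (s ∘ τ)]
      have hAd' : (Matrix.of fun j k => Λ₁ (x j - (s ∘ τ) k)).det
          = ((Matrix.of fun j k => Λ₁ (x j - s k)).submatrix id τ).det := rfl
      rw [hAd', Matrix.det_permute' τ]
      ring_nf
      rfl
    simp_rw [hterm]
    rw [← Finset.mul_sum]
    congr 1
    rw [Matrix.det_apply']
    simp [Matrix.of_apply]
  have nonneg : 0 ≤ ∫ s : Fin n → ℝ, ∑ τ : Equiv.Perm (Fin n), F (s ∘ τ) :=
    integral_nonneg fun s => by rw [point s]; exact dets_nonneg h₁ h₂ hx hy s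
  have card_eq : ∑ τ : Equiv.Perm (Fin n), ∫ s : Fin n → ℝ, F (s ∘ τ)
      = (Fintype.card (Equiv.Perm (Fin n)) : ℝ) * ∫ s, F s := by
    rw [Finset.sum_congr rfl fun τ _ => perm_int τ, Finset.sum_const, nsmul_eq_mul,
      Finset.card_univ]
  have card_pos : (0 : ℝ) < (Fintype.card (Equiv.Perm (Fin n)) : ℝ) := by
    exact_mod_cast Fintype.card_pos
  have key : 0 ≤ (Fintype.card (Equiv.Perm (Fin n)) : ℝ) * ∫ s, F s := by
    rw [← card_eq, sum_perm]; exact nonneg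
  nlinarith [key, card_pos]

end PFAux

open scoped Convolution

/-- The convolution of two Pólya frequency functions is a Pólya frequency function. -/
theorem polyaFrequency_convolution (Λ₁ Λ₂ : ℝ → ℝ)
    (h₁ : PolyaFrequency Λ₁) (h₂ : PolyaFrequency Λ₂) :
    PolyaFrequency (fun x => ∫ t : ℝ, Λ₁ (x - t) * Λ₂ t) := by
  obtain ⟨htp₁, hi₁, hne₁⟩ := h₁
  obtain ⟨htp₂, hi₂, hne₂⟩ := h₂
  have hm₁ : Measurable Λ₁ := htp₁.1
  have hm₂ : Measurable Λ₂ := htp₂.1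
  have hnn₁ : ∀ u, 0 ≤ Λ₁ u := PFAux.tp_nonneg htp₁
  have hnn₂ : ∀ u, 0 ≤ Λ₂ u := PFAux.tp_nonneg htp₂
  obtain ⟨B₁, hB₁⟩ := PFAux.pf_bounded ⟨htp₁, hi₁, hne₁⟩
  have hmeas : Measurable fun x : ℝ => ∫ t : ℝ, Λ₁ (x - t) * Λ₂ t := by
    have h : StronglyMeasurable (Function.uncurry fun x t : ℝ => Λ₁ (x - t) * Λ₂ t) :=
      ((hm₁.comp (measurable_fst.sub measurable_snd)).mul
        (hm₂.comp measurable_snd)).stronglyMeasurable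
    exact (h.integral_prod_right (ν := volume)).measurable
  have conv_eq : (fun x : ℝ => ∫ t, Λ₁ (x - t) * Λ₂ t)
      = (Λ₂ ⋆[ContinuousLinearMap.mul ℝ ℝ, volume] Λ₁) := by
    funext x
    rw [convolution_def]
    simp only [ContinuousLinearMap.mul_apply']
    congr 1; funext t; rw [mul_comm]
  have hconv_int : Integrable (fun x => ∫ t : ℝ, Λ₁ (x - t) * Λ₂ t) := by
    rw [conv_eq]
    exact hi₂.integrable_convolution (ContinuousLinearMap.mul ℝ ℝ) hi₁
  refine ⟨⟨hmeas, fun n x y hx hy => ?_⟩, hconv_int, fun hae => ?_⟩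
  · exact PFAux.conv_det_nonneg htp₁ htp₂ hi₂ B₁ hB₁ hnn₁ hnn₂ x y hx hy
  · have h0 : ∫ x, (∫ t : ℝ, Λ₁ (x - t) * Λ₂ t) = 0 := integral_eq_zero_of_ae hae
    rw [conv_eq, integral_convolution (ContinuousLinearMap.mul ℝ ℝ) hi₂ hi₁] at h0
    simp only [ContinuousLinearMap.mul_apply'] at h0
    have p₁ : 0 < ∫ u, Λ₁ u := (integral_pos_iff_support_of_nonneg hnn₁ hi₁).2
      (pos_iff_ne_zero.mpr fun h => hne₁ (ae_iff.2 h))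
    have p₂ : 0 < ∫ u, Λ₂ u := (integral_pos_iff_support_of_nonneg hnn₂ hi₂).2
      (pos_iff_ne_zero.mpr fun h => hne₂ (ae_iff.2 h))
    nlinarith [h0, p₁, p₂]
end

section
/- The function Λ(x) = e^{−e^{−x}} is totally positive, the function Λ₁(x) = e^{−x − e^{−x}} is a Pólya frequency function, and Γ(s) = ∫_{-∞}^{∞} e^{−e^{−x}} e^{−sx} dx for all s ∈ ℂ with Re s > 0. -/
open MeasureTheory Complex

open Set


/-- An "exponential polynomial" `t ↦ ∑ j, c j * t ^ (b j)` (real exponents, `t > 0`) with `n`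
terms, distinct exponents and not all coefficients zero, cannot vanish at `n` distinct
positive points. -/
lemma expPoly_no_zeros : ∀ (n : ℕ) (c b : Fin n → ℝ), Function.Injective b → c ≠ 0 →
    ∀ z : Fin n → ℝ, StrictMono z → (∀ i, 0 < z i) →
    ¬ (∀ i, ∑ j, c j * z i ^ (b j) = 0) := by
  intro n
  induction n with
  | zero => intro c b _ hc _ _ _ _; exact hc (Subsingleton.elim c 0)
  | succ n ih =>
    intro c b hb hc z hz hzpos hzero
    set g : ℝ → ℝ := fun t => ∑ j, c j * t ^ (b j - b 0) with hgdef
    have hgz : ∀ i, g (z i) = 0 := by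
      intro i
      have h0 : (0:ℝ) < z i := hzpos i
      have : g (z i) = (∑ j, c j * z i ^ b j) / z i ^ b 0 := by
        rw [Finset.sum_div]
        refine Finset.sum_congr rfl fun j _ => ?_
        rw [Real.rpow_sub h0, mul_div_assoc]
      rw [this, hzero i, zero_div]
    have hderiv : ∀ t : ℝ, 0 < t →
        HasDerivAt g (∑ j, c j * ((b j - b 0) * t ^ (b j - b 0 - 1))) t := by
      intro t ht
      apply HasDerivAt.fun_sum
      intro j _
      exact (Real.hasDerivAt_rpow_const (Or.inl ht.ne')).const_mul (c j)
    have key : ∀ i : Fin n, ∃ w ∈ Ioo (z i.castSucc) (z i.succ), deriv g w = 0 := by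
      intro i
      apply exists_deriv_eq_zero (hz (Fin.castSucc_lt_succ : i.castSucc < i.succ))
      · intro u hu
        have hu0 : 0 < u := lt_of_lt_of_le (hzpos i.castSucc) hu.1
        exact (hderiv u hu0).continuousAt.continuousWithinAt
      · rw [hgz, hgz]
    choose w hw hw0 using key
    have hwpos : ∀ i, 0 < w i := fun i => (hzpos _).trans (hw i).1
    have hwmono : StrictMono w := by
      intro i i' hii'
      have h1 : z i.succ ≤ z i'.castSucc := hz.monotone (Fin.succ_le_castSucc_iff.mpr hii')
      exact (hw i).2.trans_le (h1.trans (hw i').1.le)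
    set c' : Fin n → ℝ := fun j => c j.succ * (b j.succ - b 0) with hc'def
    set b' : Fin n → ℝ := fun j => b j.succ - b 0 - 1 with hb'def
    have hb' : Function.Injective b' := by
      intro j k hjk
      have : b j.succ = b k.succ := by
        have := hjk
        simp only [hb'def] at this
        linarith
      exact Fin.succ_injective n (hb this)
    have hsum' : ∀ i, ∑ j, c' j * w i ^ (b' j) = 0 := by
      intro i
      have hd := (hderiv (w i) (hwpos i)).deriv
      rw [hw0 i] at hd
      have h2 := hd.symm
      rw [Fin.sum_univ_succ] at h2
      simp only [sub_self, zero_mul, mul_zero, zero_add] at h2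
      rw [← h2]
      refine Finset.sum_congr rfl fun j _ => ?_
      simp only [hc'def, hb'def]
      ring
    by_cases hc' : c' = 0
    · have hcs : ∀ j : Fin n, c j.succ = 0 := by
        intro j
        have h3 := congrFun hc' j
        simp only [hc'def, Pi.zero_apply] at h3
        rcases mul_eq_zero.1 h3 with h | h
        · exact h
        · exact absurd (hb (sub_eq_zero.1 h)) (Fin.succ_ne_zero j)
      have h00 := hzero 0
      rw [Fin.sum_univ_succ] at h00
      simp only [hcs, zero_mul, Finset.sum_const_zero, add_zero] at h00
      have hzp := Real.rpow_pos_of_pos (hzpos 0) (b 0)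
      have hc00 : c 0 = 0 := by
        rcases mul_eq_zero.1 h00 with h | h
        · exact h
        · exact absurd h hzp.ne'
      apply hc
      funext j
      refine Fin.cases ?_ ?_ j
      · exact hc00
      · intro j; exact hcs j
    · exact ih c' b' hb' hc' w hwmono hwpos hsum'

lemma det_rpow_ne_zero {n : ℕ} {t b : Fin n → ℝ} (ht : StrictMono t) (htpos : ∀ i, 0 < t i)
    (hb : Function.Injective b) :
    (Matrix.of fun i j => t i ^ b j : Matrix (Fin n) (Fin n) ℝ).det ≠ 0 := by
  intro hdet
  obtain ⟨v, hv, hmv⟩ := Matrix.exists_mulVec_eq_zero_iff.mpr hdet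
  apply expPoly_no_zeros n v b hb hv t ht htpos
  intro i
  have h1 := congrFun hmv i
  simp only [Matrix.mulVec, dotProduct, Matrix.of_apply, Pi.zero_apply] at h1
  rw [← h1]
  exact Finset.sum_congr rfl fun j _ => mul_comm _ _

lemma det_rpow_pos {n : ℕ} {t : Fin n → ℝ} (ht : StrictMono t) (htpos : ∀ i, 0 < t i)
    {b : Fin n → ℝ} (hb : StrictMono b) :
    0 < (Matrix.of fun i j => t i ^ b j : Matrix (Fin n) (Fin n) ℝ).det := by
  set F : (Fin n → ℝ) → ℝ :=
    fun c => (Matrix.of fun i j => t i ^ c j : Matrix (Fin n) (Fin n) ℝ).det with hF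
  have hFcont : Continuous F := by
    apply Continuous.matrix_det
    apply continuous_matrix
    intro i j
    have he : (fun c : Fin n → ℝ => (Matrix.of fun i j => t i ^ c j
        : Matrix (Fin n) (Fin n) ℝ) i j) = fun c => Real.exp (Real.log (t i) * c j) := by
      funext c
      simp only [Matrix.of_apply]
      rw [Real.rpow_def_of_pos (htpos i)]
    rw [he]
    exact (continuous_const.mul (continuous_apply j)).rexp
  have hvdm : 0 < F (fun j => ((j : ℕ) : ℝ)) := by
    have hFv : F (fun j => ((j : ℕ) : ℝ)) = (Matrix.vandermonde t).det := by
      simp only [hF]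
      congr 1
      ext i j
      simp only [Matrix.of_apply, Matrix.vandermonde_apply]
      rw [Real.rpow_natCast]
    rw [hFv, Matrix.det_vandermonde]
    refine Finset.prod_pos fun i _ => Finset.prod_pos fun j hj => ?_
    exact sub_pos.mpr (ht (Finset.mem_Ioi.mp hj))
  have hmix : ∀ θ ∈ Icc (0:ℝ) 1,
      StrictMono (fun j : Fin n => (1-θ) * ((j : ℕ) : ℝ) + θ * b j) := by
    intro θ hθ j k hjk
    rcases eq_or_lt_of_le hθ.1 with h0 | h0
    · have hθ0 : θ = 0 := h0.symm
      simp only [hθ0, zero_mul, add_zero, sub_zero, one_mul]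
      exact_mod_cast hjk
    · have h1 : (1-θ) * ((j : ℕ) : ℝ) ≤ (1-θ) * ((k : ℕ) : ℝ) := by
        apply mul_le_mul_of_nonneg_left _ (by linarith [hθ.2])
        exact_mod_cast hjk.le
      have h2 : θ * b j < θ * b k := by
        exact mul_lt_mul_of_pos_left (hb hjk) h0
      show (1-θ) * ((j : ℕ) : ℝ) + θ * b j < (1-θ) * ((k : ℕ) : ℝ) + θ * b k
      linarith
  have hne : ∀ θ ∈ Icc (0:ℝ) 1,
      F (fun j => (1-θ) * ((j : ℕ) : ℝ) + θ * b j) ≠ 0 := fun θ hθ =>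
    det_rpow_ne_zero ht htpos (hmix θ hθ).injective
  set G : ℝ → ℝ := fun θ => F (fun j => (1-θ) * ((j : ℕ) : ℝ) + θ * b j) with hG
  have hG0 : G 0 = F (fun j => ((j : ℕ) : ℝ)) := by
    simp only [hG]; congr 1; funext j; ring
  have hG1 : G 1 = F b := by
    simp only [hG]; congr 1; funext j; ring
  rcases lt_trichotomy (F b) 0 with hlt | heq | hgt
  · exfalso
    have hGc : ContinuousOn G (Icc 0 1) :=
      (hFcont.comp (by continuity : Continuous fun θ : ℝ =>
        (fun j : Fin n => (1-θ) * ((j : ℕ) : ℝ) + θ * b j))).continuousOn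
    have hsub := intermediate_value_Icc' (zero_le_one) hGc
    have h0mem : (0:ℝ) ∈ Icc (G 1) (G 0) := by
      constructor
      · rw [hG1]; exact hlt.le
      · rw [hG0]; exact hvdm.le
    obtain ⟨θ, hθ, hθ0⟩ := hsub h0mem
    exact hne θ hθ hθ0
  · exfalso
    apply hne 1 ⟨zero_le_one, le_refl 1⟩
    show G 1 = 0
    rw [hG1, heq]
  · exact hgt

lemma gumbel_det_nonneg {n : ℕ} (x y : Fin n → ℝ) (hx : StrictMono x) (hy : StrictMono y) :
    0 ≤ (Matrix.of fun j k => Real.exp (-Real.exp (-(x j - y k)))).det := by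
  have hmat : (Matrix.of fun j k => Real.exp (-Real.exp (-(x j - y k)))) =
      (Matrix.of fun j k => (Real.exp (-Real.exp (-x j))) ^ (Real.exp (y k))
        : Matrix (Fin n) (Fin n) ℝ) := by
    ext j k
    simp only [Matrix.of_apply]
    rw [Real.rpow_def_of_pos (Real.exp_pos _), Real.log_exp, neg_mul, ← Real.exp_add]
    congr 2
    rw [neg_sub]
    ring
  rw [hmat]
  refine (det_rpow_pos ?_ (fun i => Real.exp_pos _) ?_).le
  · intro a b hab
    exact Real.exp_lt_exp.2 (neg_lt_neg (Real.exp_lt_exp.2 (neg_lt_neg (hx hab))))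
  · intro a b hab
    exact Real.exp_lt_exp.2 (hy hab)

lemma gumbel1_det_nonneg {n : ℕ} (x y : Fin n → ℝ) (hx : StrictMono x) (hy : StrictMono y) :
    0 ≤ (Matrix.of fun j k => Real.exp (-(x j - y k) - Real.exp (-(x j - y k)))).det := by
  have hmat : (Matrix.of fun j k => Real.exp (-(x j - y k) - Real.exp (-(x j - y k)))
      : Matrix (Fin n) (Fin n) ℝ) =
      Matrix.of (fun j k => Real.exp (y k) *
        ((Matrix.of fun j k => Real.exp (-x j) *
          ((Matrix.of fun j k => Real.exp (-Real.exp (-(x j - y k)))) j k)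
          : Matrix (Fin n) (Fin n) ℝ) j k)) := by
    ext j k
    simp only [Matrix.of_apply]
    rw [← Real.exp_add, ← Real.exp_add]
    congr 1
    ring
  rw [hmat, Matrix.det_mul_row, Matrix.det_mul_column]
  refine mul_nonneg (Finset.prod_nonneg fun _ _ => (Real.exp_pos _).le) ?_
  exact mul_nonneg (Finset.prod_nonneg fun _ _ => (Real.exp_pos _).le)
    (gumbel_det_nonneg x y hx hy)

-- substitution map
lemma negexp_hasDeriv (x : ℝ) :
    HasDerivAt (fun x : ℝ => Real.exp (-x)) (-Real.exp (-x)) x := by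
  simpa [Function.comp_def] using (Real.hasDerivAt_exp (-x)).comp x (hasDerivAt_neg x)

lemma negexp_inj : Function.Injective (fun x : ℝ => Real.exp (-x)) :=
  fun a b h => neg_injective (Real.exp_injective h)

lemma negexp_range : (fun x : ℝ => Real.exp (-x)) '' Set.univ = Set.Ioi (0:ℝ) := by
  rw [Set.image_univ]
  ext u
  constructor
  · rintro ⟨x, rfl⟩; exact Real.exp_pos _
  · intro hu; exact ⟨-Real.log u, by simp [Real.exp_log hu]⟩

lemma gumbel1_integrable : Integrable (fun x : ℝ => Real.exp (-x - Real.exp (-x))) := by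
  have h := integrableOn_image_iff_integrableOn_abs_deriv_smul (MeasurableSet.univ)
    (fun x _ => (negexp_hasDeriv x).hasDerivWithinAt)
    (negexp_inj.injOn) (fun t => Real.exp (-t))
  rw [negexp_range] at h
  have hL : IntegrableOn (fun t => Real.exp (-t)) (Set.Ioi (0:ℝ)) := by
    have := exp_neg_integrableOn_Ioi 0 (zero_lt_one)
    simpa using this
  have h2 := h.mp hL
  rw [integrableOn_univ] at h2
  refine h2.congr (Filter.Eventually.of_forall fun x => ?_)
  simp only [abs_neg, abs_of_pos (Real.exp_pos (-x)), smul_eq_mul, ← Real.exp_add]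
  congr 1

lemma gumbel_gamma (s : ℂ) (hs : 0 < s.re) :
    Complex.Gamma s = ∫ x : ℝ, (Real.exp (-Real.exp (-x)) : ℂ) * Complex.exp (-s * x) := by
  rw [Complex.Gamma_eq_integral hs]
  have h := integral_image_eq_integral_abs_deriv_smul (MeasurableSet.univ)
    (fun x (_ : x ∈ Set.univ) => (negexp_hasDeriv x).hasDerivWithinAt)
    (negexp_inj.injOn) (fun t : ℝ => ((Real.exp (-t) : ℝ) : ℂ) * (t : ℂ) ^ (s - 1))
  rw [negexp_range] at h
  rw [Complex.GammaIntegral, h, MeasureTheory.setIntegral_univ]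
  refine integral_congr_ae (Filter.Eventually.of_forall fun x => ?_)
  simp only [abs_neg, abs_of_pos (Real.exp_pos (-x)), real_smul, Complex.ofReal_exp]
  rw [Complex.cpow_def_of_ne_zero (Complex.exp_ne_zero _),
    Complex.log_exp (by simp [Real.pi_pos] : -Real.pi < ((-x:ℝ):ℂ).im)
      (by simp [Real.pi_pos.le] : ((-x:ℝ):ℂ).im ≤ Real.pi)]
  rw [mul_left_comm, ← Complex.exp_add]
  congr 2
  push_cast
  ring

/-- `Λ(x) = e^{-e^{-x}}` is totally positive, `Λ₁(x) = e^{-x - e^{-x}}` is a Pólya frequency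
function, and the two-sided Laplace transform of `Λ` is the Gamma function on `Re s > 0`. -/
theorem gumbel_totallyPositive :
    TotallyPositive (fun x : ℝ => Real.exp (-Real.exp (-x))) ∧
    PolyaFrequency (fun x : ℝ => Real.exp (-x - Real.exp (-x))) ∧
    ∀ s : ℂ, 0 < s.re →
      Complex.Gamma s = ∫ x : ℝ, (Real.exp (-Real.exp (-x)) : ℂ) * Complex.exp (-s * x) := by
  refine ⟨⟨?_, ?_⟩, ⟨⟨?_, ?_⟩, ?_, ?_⟩, ?_⟩
  · fun_prop
  · intro n x y hx hy
    exact gumbel_det_nonneg x y hx hy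
  · fun_prop
  · intro n x y hx hy
    exact gumbel1_det_nonneg x y hx hy
  · exact gumbel1_integrable
  · intro h
    obtain ⟨x, hx⟩ := h.exists
    exact (Real.exp_pos _).ne' hx
  · intro s hs
    exact gumbel_gamma s hs
end

section
/- The logistic-type function Λ(x) = 1/(1 + e^{−x}) is totally positive, and its two-sided Laplace transform satisfies ∫_{-∞}^{∞} e^{−sx}/(1 + e^{−x}) dx = π / sin(πs) for all s ∈ ℂ with 0 < Re s < 1. -/
open MeasureTheory Complex

open Set

lemma cauchy_det_nonneg : ∀ (n : ℕ) (a b : Fin n → ℝ), (∀ j k, 0 < a j + b k) →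
    Monotone a → Monotone b → 0 ≤ (Matrix.of fun j k => (a j + b k)⁻¹).det := by
  intro n
  induction n with
  | zero => intro a b _ _ _; simp [Matrix.det_fin_zero]
  | succ n ih =>
    intro a b hpos ha hb
    set C : Matrix (Fin (n+1)) (Fin (n+1)) ℝ := Matrix.of fun j k => (a j + b k)⁻¹ with hC
    set c : Fin (n+1) → ℝ := fun i => if i = 0 then 0 else -((a 0 + b 0) / (a i + b 0)) with hc
    set A : Matrix (Fin (n+1)) (Fin (n+1)) ℝ := Matrix.of fun i j => C i j + c i * C 0 j with hA
    have hdet : A.det = C.det :=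
      Matrix.det_eq_of_forall_row_eq_smul_add_const c 0 (by simp [hc]) (fun i j => rfl)
    -- expand along column 0
    have hA0 : ∀ i, i ≠ 0 → A i 0 = 0 := by
      intro i hi
      have h1 : a i + b 0 ≠ 0 := (hpos i 0).ne'
      have h2 : a 0 + b 0 ≠ 0 := (hpos 0 0).ne'
      simp only [hA, hc, hC, Matrix.of_apply, if_neg hi]
      field_simp
      ring
    have hexp := Matrix.det_succ_column_zero A
    rw [Finset.sum_eq_single 0 (by
      intro i _ hi
      rw [hA0 i hi]; ring) (by simp)] at hexp
    -- the minor
    set u : Fin n → ℝ := fun i => (a i.succ - a 0) / (a i.succ + b 0) with hu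
    set v : Fin n → ℝ := fun j => (b j.succ - b 0) / (a 0 + b j.succ) with hv
    have hminor : (A.submatrix (Fin.succAbove 0) Fin.succ) =
        Matrix.of fun i j => u i * (v j * (a i.succ + b j.succ)⁻¹) := by
      ext i j
      have h1 : a i.succ + b j.succ ≠ 0 := (hpos _ _).ne'
      have h2 : a 0 + b j.succ ≠ 0 := (hpos _ _).ne'
      have h3 : a i.succ + b 0 ≠ 0 := (hpos _ _).ne'
      have h4 : a 0 + b 0 ≠ 0 := (hpos _ _).ne'
      simp only [Matrix.submatrix_apply, hA, hC, hc, hu, hv, Matrix.of_apply,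
        Fin.succAbove_zero, if_neg (Fin.succ_ne_zero i)]
      field_simp
      ring
    have hdetminor : 0 ≤ (A.submatrix (Fin.succAbove 0) Fin.succ).det := by
      have e1 : (Matrix.of fun i j => u i * (v j * (a i.succ + b j.succ)⁻¹)) =
          Matrix.of fun i j => u i * ((Matrix.of fun i j =>
            v j * ((Matrix.of fun (i : Fin n) (j : Fin n) =>
              (a i.succ + b j.succ)⁻¹) i j)) i j) := rfl
      rw [hminor, e1, Matrix.det_mul_column u, Matrix.det_mul_row v]
      have hu0 : 0 ≤ ∏ i, u i := Finset.prod_nonneg fun i _ =>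
        div_nonneg (sub_nonneg.2 (ha (Fin.zero_le _))) (hpos _ _).le
      have hv0 : 0 ≤ ∏ j, v j := Finset.prod_nonneg fun j _ =>
        div_nonneg (sub_nonneg.2 (hb (Fin.zero_le _))) (hpos _ _).le
      have hih := ih (fun i => a i.succ) (fun j => b j.succ) (fun j k => hpos _ _)
        (fun i j hij => ha (Fin.succ_le_succ_iff.mpr hij)) (fun i j hij => hb (Fin.succ_le_succ_iff.mpr hij))
      exact mul_nonneg hu0 (mul_nonneg hv0 hih)
    rw [← hdet, hexp]
    have hA00 : 0 ≤ A 0 0 := by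
      simp only [hA, hc, hC, Matrix.of_apply, if_pos rfl]
      have := (hpos 0 0)
      simp
      positivity
    simpa using mul_nonneg hA00 hdetminor


noncomputable def phi (x : ℝ) : ℝ := (1 + Real.exp (-x))⁻¹

lemma phi_pos (x : ℝ) : 0 < phi x := by
  unfold phi; positivity

lemma phi_lt_one (x : ℝ) : phi x < 1 := by
  unfold phi
  rw [inv_lt_one_iff₀]
  right; linarith [Real.exp_pos (-x)]

lemma phi_strictMono : StrictMono phi := by
  intro x y hxy
  unfold phi
  have h1 : (0:ℝ) < 1 + Real.exp (-y) := by positivity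
  have h2 : (0:ℝ) < 1 + Real.exp (-x) := by positivity
  apply inv_strictAnti₀ h1
  have := Real.exp_lt_exp.2 (neg_lt_neg hxy)
  linarith

lemma phi_hasDerivAt (x : ℝ) : HasDerivAt phi (Real.exp (-x) * phi x ^ 2) x := by
  have h : HasDerivAt (fun x : ℝ => 1 + Real.exp (-x)) (-Real.exp (-x)) x := by
    simpa using (Real.hasDerivAt_exp (-x)).comp x (hasDerivAt_neg x) |>.const_add 1
  have hne : (1 + Real.exp (-x)) ≠ 0 := by positivity
  have : HasDerivAt (fun y : ℝ => (1 + Real.exp (-y))⁻¹)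
      (- -Real.exp (-x) / (1 + Real.exp (-x)) ^ 2) x := h.inv hne
  convert this using 1
  unfold phi
  field_simp
  unfold phi
  field_simp

lemma phi_range : phi '' univ = Ioo 0 1 := by
  rw [image_univ]
  ext u
  constructor
  · rintro ⟨x, rfl⟩
    exact ⟨phi_pos x, phi_lt_one x⟩
  · rintro ⟨hu0, hu1⟩
    refine ⟨Real.log (u / (1 - u)), ?_⟩
    have h1u : (0:ℝ) < 1 - u := by linarith
    have hq : (0:ℝ) < u / (1 - u) := by positivity
    unfold phi
    rw [← Real.log_inv, Real.exp_log (by positivity)]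
    rw [inv_div]
    field_simp
    ring

lemma cpow_pos_real (r : ℝ) (hr : 0 < r) (w : ℂ) :
    (r : ℂ) ^ w = Complex.exp ((Real.log r : ℂ) * w) := by
  rw [Complex.cpow_def_of_ne_zero (by exact_mod_cast hr.ne'), Complex.ofReal_log hr.le]

lemma laplace_eq (s : ℂ) (hs0 : 0 < s.re) (hs1 : s.re < 1) :
    ∫ x : ℝ, Complex.exp (-s * x) / (1 + (Real.exp (-x) : ℂ)) =
      (Real.pi : ℂ) / Complex.sin (Real.pi * s) := by
  set g : ℝ → ℂ := fun u => ((1 - u : ℝ) : ℂ) ^ (s - 1) * ((u : ℝ) : ℂ) ^ (-s) with hg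
  have key : ∫ u in Ioo (0:ℝ) 1, g u = ∫ x : ℝ, |Real.exp (-x) * phi x ^ 2| • g (phi x) := by
    rw [← phi_range, integral_image_eq_integral_abs_deriv_smul MeasurableSet.univ
      (fun x _ => (phi_hasDerivAt x).hasDerivWithinAt) (phi_strictMono.injective.injOn) g,
      setIntegral_univ]
  have pointwise : ∀ x : ℝ, |Real.exp (-x) * phi x ^ 2| • g (phi x) =
      Complex.exp (-s * x) / (1 + (Real.exp (-x) : ℂ)) := by
    intro x
    set E := Real.exp (-x) with hE
    set F := 1 + E with hF
    have hEpos : 0 < E := Real.exp_pos _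
    have hFpos : 0 < F := by positivity
    set L := Real.log F with hL
    have h1phi : (1:ℝ) - F⁻¹ = E * F⁻¹ := by
      field_simp
      rw [hF]; ring
    have habs : |E * phi x ^ 2| = E * phi x ^ 2 := abs_of_pos (by
      have := phi_pos x; positivity)
    rw [habs, real_smul]
    have hphi : phi x = F⁻¹ := rfl
    rw [hg]
    simp only [hphi]
    rw [h1phi]
    rw [cpow_pos_real _ (by positivity), cpow_pos_real _ (by positivity)]
    have hlog1 : Real.log (E * F⁻¹) = -x - L := by
      rw [Real.log_mul hEpos.ne' (by positivity), hE, Real.log_exp, Real.log_inv, hL]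
      ring
    have hlog2 : Real.log F⁻¹ = -L := by rw [Real.log_inv, hL]
    rw [hlog1, hlog2]
    have hFC : (F : ℂ) = Complex.exp (L : ℂ) := by
      rw [← Complex.ofReal_exp, hL, Real.exp_log hFpos]
    have hEC : (E : ℂ) = Complex.exp (-(x:ℂ)) := by
      rw [hE, Complex.ofReal_exp]; norm_cast
    have lhs_eq : ((E * F⁻¹ ^ 2 : ℝ) : ℂ) = Complex.exp (-(x:ℂ)) * (Complex.exp (L:ℂ))⁻¹ *
        (Complex.exp (L:ℂ))⁻¹ := by
      push_cast
      rw [hEC, hFC]; ring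
    calc ((E * (F⁻¹) ^ 2 : ℝ) : ℂ) * (Complex.exp ((↑(-x - L)) * (s-1)) *
          Complex.exp ((↑(-L):ℂ) * (-s)))
        = Complex.exp (-(x:ℂ)) * (Complex.exp (L:ℂ))⁻¹ * (Complex.exp (L:ℂ))⁻¹ *
          (Complex.exp ((↑(-x - L)) * (s-1)) * Complex.exp ((↑(-L):ℂ) * (-s))) := by
          rw [lhs_eq]
      _ = Complex.exp (-s * x) * (Complex.exp (L:ℂ))⁻¹ := by
          simp only [← Complex.exp_neg, ← Complex.exp_add]
          congr 1
          push_cast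
          ring
      _ = Complex.exp (-s * x) / (1 + (E : ℂ)) := by
          rw [div_eq_mul_inv]
          congr 2
          rw [← hFC]
          push_cast [hF]
          ring
  have beta_eq : ∫ u in Ioo (0:ℝ) 1, g u = Complex.betaIntegral (1 - s) s := by
    rw [Complex.betaIntegral, intervalIntegral.integral_of_le zero_le_one,
      integral_Ioc_eq_integral_Ioo]
    apply setIntegral_congr_fun measurableSet_Ioo
    intro u hu
    have : (1:ℂ) - s - 1 = -s := by ring
    rw [hg]
    simp only
    rw [this]
    push_cast
    ring
  have gamma_eq : Complex.betaIntegral (1 - s) s = (Real.pi : ℂ) / Complex.sin (Real.pi * s) := by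
    have h1 : (0:ℝ) < (1 - s).re := by simp [Complex.sub_re]; linarith
    have := Complex.Gamma_mul_Gamma_eq_betaIntegral h1 hs0
    rw [sub_add_cancel, Complex.Gamma_one, one_mul] at this
    rw [← this, mul_comm, Complex.Gamma_mul_Gamma_one_sub s]
  calc ∫ x : ℝ, Complex.exp (-s * x) / (1 + (Real.exp (-x) : ℂ))
      = ∫ x : ℝ, |Real.exp (-x) * phi x ^ 2| • g (phi x) := by
        congr 1; ext x; rw [pointwise]
    _ = (Real.pi : ℂ) / Complex.sin (Real.pi * s) := by rw [← key, beta_eq, gamma_eq]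

lemma logistic_tp : TotallyPositive (fun x : ℝ => 1 / (1 + Real.exp (-x))) := by
  constructor
  · have hc : Continuous fun x : ℝ => 1 / (1 + Real.exp (-x)) := by
      apply Continuous.div continuous_const
      · continuity
      · intro x
        positivity
    exact hc.measurable
  · intro n x y hx hy
    have hmat : (Matrix.of fun j k => 1 / (1 + Real.exp (-(x j - y k)))) =
        Matrix.of fun j k => Real.exp (x j) *
          ((Matrix.of fun (j : Fin n) (k : Fin n) =>
            (Real.exp (x j) + Real.exp (y k))⁻¹) j k) := by
      ext j k
      simp only [Matrix.of_apply]
      have h1 : Real.exp (-(x j - y k)) = Real.exp (y k) / Real.exp (x j) := by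
        rw [← Real.exp_sub]; ring_nf
      rw [h1]
      have h2 := Real.exp_pos (x j)
      have h3 := Real.exp_pos (y k)
      field_simp
    rw [hmat, Matrix.det_mul_column]
    have h := cauchy_det_nonneg n (fun j => Real.exp (x j)) (fun k => Real.exp (y k))
      (fun j k => by positivity) (Real.exp_monotone.comp hx.monotone)
      (Real.exp_monotone.comp hy.monotone)
    exact mul_nonneg (Finset.prod_nonneg fun i _ => (Real.exp_pos _).le) h

/-- The logistic-type function `x ↦ 1/(1 + e^{-x})` is totally positive and its two-sided
Laplace transform equals `π / sin(π s)` for `0 < Re s < 1`. -/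
theorem logistic_totallyPositive :
    TotallyPositive (fun x : ℝ => 1 / (1 + Real.exp (-x))) ∧
    ∀ s : ℂ, 0 < s.re → s.re < 1 →
      ∫ x : ℝ, Complex.exp (-s * x) / (1 + (Real.exp (-x) : ℂ)) =
        (Real.pi : ℂ) / Complex.sin (Real.pi * s) := by
  exact ⟨logistic_tp, fun s hs0 hs1 => laplace_eq s hs0 hs1⟩
end
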